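/- arXiv:2504.17564 — 15 statements merged into one kernel-verified Lean document; each statement's English description precedes it below -/
import Mathlib

section
/- Let k ≥ 2 and n ≥ 1 be integers. Then the number C_k(n) of cycles (including fixed points) in the decomposition of the (k,n)-perfect shuffle permutation σ_{k,n} into a product of disjoint cycles equals the sum, over all divisors d of kn+1 with d ≠ 1, of φ(d)/ord_k(d). (Each term φ(d)/ord_k(d) is an integer since ord_k(d) divides φ(d).) -/
/-- The `(k,n)`-perfect shuffle map `x ↦ k*x mod (k*n+1)` on `{1, …, k*n}`. -/
def shuffleFun (k n : ℕ) (x : {x : ℕ // x ∈ Finset.Icc 1 (k * n)}) :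
    {x : ℕ // x ∈ Finset.Icc 1 (k * n)} :=
  ⟨k * x.1 % (k * n + 1), by
    have hx := Finset.mem_Icc.mp x.2
    have hco : Nat.Coprime (k * n + 1) k :=
      (Nat.coprime_mul_left_add_left 1 k n).mpr (Nat.coprime_one_left k)
    have hlt : k * x.1 % (k * n + 1) < k * n + 1 := Nat.mod_lt _ (Nat.succ_pos _)
    have hne : k * x.1 % (k * n + 1) ≠ 0 := by
      intro h0
      have hdvd : (k * n + 1) ∣ k * x.1 := Nat.dvd_of_mod_eq_zero h0
      have hdx : (k * n + 1) ∣ x.1 := hco.dvd_of_dvd_mul_left hdvd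
      have := Nat.le_of_dvd (by omega) hdx
      omega
    exact Finset.mem_Icc.mpr ⟨by omega, by omega⟩⟩

theorem shuffleFun_bijective (k n : ℕ) : Function.Bijective (shuffleFun k n) := by
  have hinj : Function.Injective (shuffleFun k n) := by
    intro x y hxy
    have h : k * x.1 % (k * n + 1) = k * y.1 % (k * n + 1) := congrArg Subtype.val hxy
    have hx := Finset.mem_Icc.mp x.2
    have hy := Finset.mem_Icc.mp y.2
    have hco : Nat.Coprime (k * n + 1) k :=
      (Nat.coprime_mul_left_add_left 1 k n).mpr (Nat.coprime_one_left k)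
    have hmod : x.1 % (k * n + 1) = y.1 % (k * n + 1) :=
      Nat.ModEq.cancel_left_of_coprime hco h
    rw [Nat.mod_eq_of_lt (by omega), Nat.mod_eq_of_lt (by omega)] at hmod
    exact Subtype.ext hmod
  exact Finite.injective_iff_bijective.mp hinj

/-- The `(k,n)`-perfect shuffle permutation `σ_{k,n}` of `{1, …, k*n}`. -/
noncomputable def pshuffle (k n : ℕ) : Equiv.Perm {x : ℕ // x ∈ Finset.Icc 1 (k * n)} :=
  Equiv.ofBijective _ (shuffleFun_bijective k n)

/-- The setoid on `α` identifying points on the same cycle (orbit) of `σ`. -/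
def sameCycleSetoid {α : Type*} (σ : Equiv.Perm α) : Setoid α :=
  ⟨σ.SameCycle, ⟨Equiv.Perm.SameCycle.refl σ, fun h => h.symm, fun h h' => h.trans h'⟩⟩

/-- The number of cycles (orbits, including fixed points) of a permutation. -/
noncomputable def cycleCount {α : Type*} (σ : Equiv.Perm α) : ℕ :=
  Nat.card (Quotient (sameCycleSetoid σ))

namespace PerfShufAux

variable (k n : ℕ)

lemma coprime_k : Nat.Coprime k (k * n + 1) :=
  ((Nat.coprime_mul_left_add_left 1 k n).mpr (Nat.coprime_one_left k)).symm

lemma apply_val (x : {x : ℕ // x ∈ Finset.Icc 1 (k * n)}) :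
    ((pshuffle k n) x).1 = k * x.1 % (k * n + 1) := rfl

lemma pow_apply_val (j : ℕ) (x : {x : ℕ // x ∈ Finset.Icc 1 (k * n)}) :
    (((pshuffle k n) ^ j) x).1 = k ^ j * x.1 % (k * n + 1) := by
  induction j generalizing x with
  | zero =>
      have hx := Finset.mem_Icc.mp x.2
      simp [Nat.mod_eq_of_lt (by omega : x.1 < k * n + 1)]
  | succ j ih =>
      have : ((pshuffle k n) ^ (j + 1)) x = ((pshuffle k n) ^ j) ((pshuffle k n) x) := by
        rw [pow_succ, Equiv.Perm.mul_apply]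
      rw [this, ih ((pshuffle k n) x), apply_val, Nat.mul_mod_mod, pow_succ]
      ring_nf

lemma sameCycle_iff (x y : {x : ℕ // x ∈ Finset.Icc 1 (k * n)}) :
    (pshuffle k n).SameCycle x y ↔ ∃ j : ℕ, k ^ j * x.1 % (k * n + 1) = y.1 := by
  constructor
  · intro h
    obtain ⟨i, _, hiy⟩ := h.exists_pow_eq'
    exact ⟨i, by rw [← pow_apply_val, hiy]⟩
  · rintro ⟨j, hj⟩
    exact ⟨(j : ℤ), by rw [zpow_natCast]; exact Subtype.ext ((pow_apply_val k n j x).trans hj)⟩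

lemma gcd_sameCycle (x y : {x : ℕ // x ∈ Finset.Icc 1 (k * n)})
    (h : (pshuffle k n).SameCycle x y) :
    Nat.gcd y.1 (k * n + 1) = Nat.gcd x.1 (k * n + 1) := by
  obtain ⟨j, hj⟩ := (sameCycle_iff k n x y).mp h
  rw [← hj]
  calc Nat.gcd (k ^ j * x.1 % (k * n + 1)) (k * n + 1)
      = Nat.gcd (k * n + 1) (k ^ j * x.1) := (Nat.gcd_rec _ _).symm
    _ = Nat.gcd (k ^ j * x.1) (k * n + 1) := Nat.gcd_comm _ _
    _ = Nat.gcd x.1 (k * n + 1) := ((coprime_k k n).pow_left j).gcd_mul_left_cancel x.1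

def D0 (x : {x : ℕ // x ∈ Finset.Icc 1 (k * n)}) : ℕ :=
  (k * n + 1) / Nat.gcd x.1 (k * n + 1)

lemma gcd_pos (x : {x : ℕ // x ∈ Finset.Icc 1 (k * n)}) : 0 < Nat.gcd x.1 (k * n + 1) :=
  Nat.gcd_pos_of_pos_right _ (Nat.succ_pos _)

lemma gcd_lt (x : {x : ℕ // x ∈ Finset.Icc 1 (k * n)}) : Nat.gcd x.1 (k * n + 1) < k * n + 1 := by
  have hx := Finset.mem_Icc.mp x.2
  have := Nat.le_of_dvd (by omega) (Nat.gcd_dvd_left x.1 (k * n + 1))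
  omega

lemma gcd_mul_D0 (x : {x : ℕ // x ∈ Finset.Icc 1 (k * n)}) :
    Nat.gcd x.1 (k * n + 1) * D0 k n x = k * n + 1 :=
  Nat.mul_div_cancel' (Nat.gcd_dvd_right x.1 (k * n + 1))

lemma D0_dvd (x : {x : ℕ // x ∈ Finset.Icc 1 (k * n)}) : D0 k n x ∣ k * n + 1 :=
  Nat.div_dvd_of_dvd (Nat.gcd_dvd_right x.1 (k * n + 1))

lemma D0_ne_one (x : {x : ℕ // x ∈ Finset.Icc 1 (k * n)}) : D0 k n x ≠ 1 := by
  intro h1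
  have := gcd_mul_D0 k n x
  rw [h1, mul_one] at this
  exact absurd this (Nat.ne_of_lt (gcd_lt k n x))

lemma D0_mem (x : {x : ℕ // x ∈ Finset.Icc 1 (k * n)}) :
    D0 k n x ∈ (k * n + 1).divisors.filter (· ≠ 1) := by
  rw [Finset.mem_filter, Nat.mem_divisors]
  exact ⟨⟨D0_dvd k n x, by omega⟩, D0_ne_one k n x⟩

lemma coprime_div (x : {x : ℕ // x ∈ Finset.Icc 1 (k * n)}) :
    Nat.Coprime (x.1 / Nat.gcd x.1 (k * n + 1)) (D0 k n x) :=
  Nat.coprime_div_gcd_div_gcd (gcd_pos k n x)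

lemma gcd_mul_div (x : {x : ℕ // x ∈ Finset.Icc 1 (k * n)}) :
    Nat.gcd x.1 (k * n + 1) * (x.1 / Nat.gcd x.1 (k * n + 1)) = x.1 :=
  Nat.mul_div_cancel' (Nat.gcd_dvd_left x.1 (k * n + 1))

lemma D0_sameCycle (x y : {x : ℕ // x ∈ Finset.Icc 1 (k * n)})
    (h : (pshuffle k n).SameCycle x y) : D0 k n x = D0 k n y := by
  unfold D0; rw [gcd_sameCycle k n x y h]

noncomputable def Dq : Quotient (sameCycleSetoid (pshuffle k n)) → ℕ :=
  Quotient.lift (D0 k n) (fun x y h => D0_sameCycle k n x y h)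

section Fixd

variable (d : ℕ) (hdvd : d ∣ k * n + 1)

def Kunit : (ZMod d)ˣ :=
  ZMod.unitOfCoprime k ((coprime_k k n).coprime_dvd_right hdvd)

noncomputable def phi0 (x : {x : ℕ // x ∈ Finset.Icc 1 (k * n)}) :
    (ZMod d)ˣ ⧸ Subgroup.zpowers (Kunit k n d hdvd) :=
  if h : D0 k n x = d then
    QuotientGroup.mk (ZMod.unitOfCoprime (x.1 / Nat.gcd x.1 (k * n + 1)) (h ▸ coprime_div k n x))
  else QuotientGroup.mk 1


lemma phi0_wd (x y : {x : ℕ // x ∈ Finset.Icc 1 (k * n)})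
    (h : (pshuffle k n).SameCycle x y) : phi0 k n d hdvd x = phi0 k n d hdvd y := by
  have hD : D0 k n x = D0 k n y := D0_sameCycle k n x y h
  by_cases hx : D0 k n x = d
  · have hy : D0 k n y = d := hD.symm.trans hx
    rw [phi0, phi0, dif_pos hx, dif_pos hy]
    obtain ⟨j, hj⟩ := (sameCycle_iff k n x y).mp h
    have hcy : Nat.gcd y.1 (k * n + 1) = Nat.gcd x.1 (k * n + 1) := gcd_sameCycle k n x y h
    have huy : Nat.gcd y.1 (k * n + 1) * (y.1 / Nat.gcd y.1 (k * n + 1)) = y.1 :=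
      gcd_mul_div k n y
    have hylt : y.1 < k * n + 1 := by have := Finset.mem_Icc.mp y.2; omega
    set A := y.1 / Nat.gcd y.1 (k * n + 1) with hA
    set G := Nat.gcd x.1 (k * n + 1) with hG
    set B := x.1 / G with hB
    have hGpos : 0 < G := gcd_pos k n x
    have hcd : G * d = k * n + 1 := by rw [hG, ← hx]; exact gcd_mul_D0 k n x
    have hux : G * B = x.1 := gcd_mul_div k n x
    rw [hcy] at huy
    have key : A % d = (k ^ j * B) % d := by
      apply Nat.eq_of_mul_eq_mul_left hGpos
      calc G * (A % d) = (G * A) % (G * d) := (Nat.mul_mod_mul_left G A d).symm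
        _ = y.1 % (k * n + 1) := by rw [huy, hcd]
        _ = y.1 := Nat.mod_eq_of_lt hylt
        _ = (k ^ j * x.1) % (k * n + 1) := hj.symm
        _ = (G * (k ^ j * B)) % (G * d) := by
              rw [hcd, ← hux, mul_left_comm]
        _ = G * ((k ^ j * B) % d) := Nat.mul_mod_mul_left G _ d
    have hcast : ((A : ℕ) : ZMod d) = ((k ^ j * B : ℕ) : ZMod d) :=
      (ZMod.natCast_eq_natCast_iff' _ _ _).mpr key
    rw [QuotientGroup.eq]
    refine ⟨(j : ℤ), eq_inv_mul_iff_mul_eq.mpr ?_⟩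
    apply Units.ext
    push_cast at hcast
    simp only [zpow_natCast, Units.val_mul, Units.val_pow_eq_pow_val,
      ZMod.coe_unitOfCoprime, Kunit]
    rw [hcast, mul_comm]
  · have hy : ¬ D0 k n y = d := fun hy => hx (hD.trans hy)
    rw [phi0, phi0, dif_neg hx, dif_neg hy]

noncomputable def phi :
    Quotient (sameCycleSetoid (pshuffle k n)) →
      (ZMod d)ˣ ⧸ Subgroup.zpowers (Kunit k n d hdvd) :=
  Quotient.lift (phi0 k n d hdvd) (fun x y h => phi0_wd k n d hdvd x y h)

end Fixd

lemma card_fiber (d : ℕ) (hdvd : d ∣ k * n + 1) (hd1 : d ≠ 1) :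
    Nat.card {q : Quotient (sameCycleSetoid (pshuffle k n)) // Dq k n q = d} =
      Nat.totient d / orderOf ((k : ZMod d)) := by
  haveI : NeZero d := ⟨fun h0 => by
    subst h0; exact absurd (Nat.eq_zero_of_zero_dvd hdvd) (by omega)⟩
  have hd0 : d ≠ 0 := NeZero.ne d
  have hd2 : 2 ≤ d := by omega
  have hm0 : 0 < k * n + 1 := Nat.succ_pos _
  have hdm : d ≤ k * n + 1 := Nat.le_of_dvd hm0 hdvd
  have hbij : Function.Bijective
      (fun q : {q : Quotient (sameCycleSetoid (pshuffle k n)) // Dq k n q = d} =>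
        phi k n d hdvd q.1) := by
    constructor
    · rintro ⟨q, hq⟩ ⟨q', hq'⟩ hf
      obtain ⟨x, rfl⟩ := Quotient.exists_rep q
      obtain ⟨y, rfl⟩ := Quotient.exists_rep q'
      have hx : D0 k n x = d := hq
      have hy : D0 k n y = d := hq'
      have hf' : phi0 k n d hdvd x = phi0 k n d hdvd y := hf
      rw [phi0, phi0, dif_pos hx, dif_pos hy, QuotientGroup.eq] at hf'
      obtain ⟨j, hj⟩ := (Submonoid.mem_powers_iff _ _).mp (mem_powers_iff_mem_zpowers.mpr hf')
      -- hj : Kunit ^ j = Ux⁻¹ * Uy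
      have hUy : ZMod.unitOfCoprime (x.1 / Nat.gcd x.1 (k * n + 1)) (hx ▸ coprime_div k n x)
            * (Kunit k n d hdvd) ^ j
          = ZMod.unitOfCoprime (y.1 / Nat.gcd y.1 (k * n + 1)) (hy ▸ coprime_div k n y) := by
        rw [hj, mul_inv_cancel_left]
      have hval : ((k ^ j * (x.1 / Nat.gcd x.1 (k * n + 1)) : ℕ) : ZMod d)
          = ((y.1 / Nat.gcd y.1 (k * n + 1) : ℕ) : ZMod d) := by
        have := congrArg Units.val hUy
        simp only [Units.val_mul, Units.val_pow_eq_pow_val, ZMod.coe_unitOfCoprime, Kunit] at this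
        push_cast
        rw [← this, mul_comm]
      have hmod : (k ^ j * (x.1 / Nat.gcd x.1 (k * n + 1))) % d
          = (y.1 / Nat.gcd y.1 (k * n + 1)) % d :=
        (ZMod.natCast_eq_natCast_iff' _ _ _).mp hval
      have hcy : Nat.gcd y.1 (k * n + 1) = Nat.gcd x.1 (k * n + 1) := by
        have h1 : Nat.gcd y.1 (k * n + 1) * d = k * n + 1 := by
          rw [← hy]; exact gcd_mul_D0 k n y
        have h0 : Nat.gcd x.1 (k * n + 1) * d = k * n + 1 := by
          rw [← hx]; exact gcd_mul_D0 k n x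
        exact Nat.eq_of_mul_eq_mul_right (by omega) (h1.trans h0.symm)
      have huy : Nat.gcd y.1 (k * n + 1) * (y.1 / Nat.gcd y.1 (k * n + 1)) = y.1 :=
        gcd_mul_div k n y
      have hylt : y.1 < k * n + 1 := by have := Finset.mem_Icc.mp y.2; omega
      set A := y.1 / Nat.gcd y.1 (k * n + 1) with hA
      set G := Nat.gcd x.1 (k * n + 1) with hG
      set B := x.1 / G with hB
      have hGpos : 0 < G := gcd_pos k n x
      have hcd : G * d = k * n + 1 := by rw [hG, ← hx]; exact gcd_mul_D0 k n x
      have hux : G * B = x.1 := gcd_mul_div k n x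
      rw [hcy] at huy
      have hfinal : k ^ j * x.1 % (k * n + 1) = y.1 := by
        calc k ^ j * x.1 % (k * n + 1) = (G * (k ^ j * B)) % (G * d) := by
              rw [hcd, ← hux, mul_left_comm]
          _ = G * ((k ^ j * B) % d) := Nat.mul_mod_mul_left G _ d
          _ = G * (A % d) := by rw [hmod]
          _ = (G * A) % (G * d) := (Nat.mul_mod_mul_left G A d).symm
          _ = y.1 % (k * n + 1) := by rw [huy, hcd]
          _ = y.1 := Nat.mod_eq_of_lt hylt
      exact Subtype.ext (Quotient.sound ((sameCycle_iff k n x y).mpr ⟨j, hfinal⟩))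
    · intro u
      obtain ⟨U, rfl⟩ := QuotientGroup.mk_surjective u
      set r := (U : ZMod d).val with hr
      have hrcop : Nat.Coprime r d := ZMod.val_coe_unit_coprime U
      have hrlt : r < d := ZMod.val_lt _
      have hrpos : 0 < r := Nat.pos_of_ne_zero (by
        intro h0
        rw [h0] at hrcop
        rw [Nat.Coprime, Nat.gcd_zero_left] at hrcop
        omega)
      set c := (k * n + 1) / d with hc
      have hcd : c * d = k * n + 1 := Nat.div_mul_cancel hdvd
      have hcpos : 0 < c := Nat.div_pos hdm (by omega)
      have hxval : 1 ≤ c * r ∧ c * r ≤ k * n := by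
        constructor
        · exact Nat.one_le_iff_ne_zero.mpr (by positivity)
        · have : c * r ≤ c * (d - 1) := Nat.mul_le_mul_left c (by omega)
          have h3 : c * (d - 1) = c * d - c := by
            rw [Nat.mul_sub_one]
          omega
      refine ⟨⟨Quotient.mk _ (⟨c * r, Finset.mem_Icc.mpr hxval⟩ :
        {x : ℕ // x ∈ Finset.Icc 1 (k * n)}), ?_⟩, ?_⟩
      · show D0 k n _ = d
        unfold D0
        show (k * n + 1) / Nat.gcd (c * r) (k * n + 1) = d
        rw [← hcd, Nat.gcd_mul_left, hrcop, mul_one, hcd]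
        rw [← hcd, Nat.mul_div_cancel_left d hcpos]
      · show phi0 k n d hdvd _ = _
        have hgcd : Nat.gcd (c * r) (k * n + 1) = c := by
          rw [← hcd, Nat.gcd_mul_left, hrcop, mul_one]
        have hD0 : D0 k n (⟨c * r, Finset.mem_Icc.mpr hxval⟩ :
            {x : ℕ // x ∈ Finset.Icc 1 (k * n)}) = d := by
          unfold D0
          show (k * n + 1) / Nat.gcd (c * r) (k * n + 1) = d
          rw [hgcd, ← hcd, Nat.mul_div_cancel_left d hcpos]
        rw [phi0, dif_pos hD0]
        congr 1
        apply Units.ext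
        have hdiv : (c * r) / Nat.gcd (c * r) (k * n + 1) = r := by
          rw [hgcd, Nat.mul_div_cancel_left r hcpos]
        show (((c * r) / Nat.gcd (c * r) (k * n + 1) : ℕ) : ZMod d) = (U : ZMod d)
        rw [hdiv, hr]
        exact ZMod.natCast_rightInverse (U : ZMod d)
  rw [Nat.card_eq_of_bijective _ hbij]
  have h1 := Subgroup.card_eq_card_quotient_mul_card_subgroup
    (Subgroup.zpowers (Kunit k n d hdvd))
  rw [Nat.card_zpowers] at h1
  have hord : orderOf (Kunit k n d hdvd) = orderOf ((k : ZMod d)) := by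
    rw [← ZMod.coe_unitOfCoprime k ((coprime_k k n).coprime_dvd_right hdvd), orderOf_units]
    rfl
  have hcardu : Nat.card (ZMod d)ˣ = Nat.totient d := by
    rw [Nat.card_eq_fintype_card, ZMod.card_units_eq_totient]
  rw [hcardu, hord] at h1
  have hpos : 0 < orderOf ((k : ZMod d)) := by
    rw [← hord]; exact orderOf_pos _
  exact (Nat.div_eq_of_eq_mul_left hpos h1).symm

end PerfShufAux

theorem perfect_shuffle_cycle_count (k n : ℕ) (hk : 2 ≤ k) (hn : 1 ≤ n) :
    (∀ d ∈ (k * n + 1).divisors.filter (· ≠ 1), orderOf (k : ZMod d) ∣ Nat.totient d) ∧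
    cycleCount (pshuffle k n) =
      ∑ d ∈ (k * n + 1).divisors.filter (· ≠ 1),
        Nat.totient d / orderOf (k : ZMod d) := by
  classical
  constructor
  · intro d hd
    rw [Finset.mem_filter, Nat.mem_divisors] at hd
    obtain ⟨⟨hdvd, hm0⟩, hd1⟩ := hd
    haveI : NeZero d := ⟨fun h0 => by subst h0; exact hm0 (Nat.eq_zero_of_zero_dvd hdvd)⟩
    have hco : Nat.Coprime k d := (PerfShufAux.coprime_k k n).coprime_dvd_right hdvd
    have h2 : orderOf ((k : ZMod d)) = orderOf (ZMod.unitOfCoprime k hco) := by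
      rw [← ZMod.coe_unitOfCoprime k hco, orderOf_units]
    rw [h2, ← ZMod.card_units_eq_totient]
    exact orderOf_dvd_card
  · haveI : Fintype (Quotient (sameCycleSetoid (pshuffle k n))) := Fintype.ofFinite _
    have hcc : cycleCount (pshuffle k n)
        = Fintype.card (Quotient (sameCycleSetoid (pshuffle k n))) := Nat.card_eq_fintype_card
    have hmemb : ∀ q : Quotient (sameCycleSetoid (pshuffle k n)),
        PerfShufAux.Dq k n q ∈ (k * n + 1).divisors.filter (· ≠ 1) := by
      intro q
      obtain ⟨x, rfl⟩ := Quotient.exists_rep q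
      exact PerfShufAux.D0_mem k n x
    have hfib := Finset.card_eq_sum_card_fiberwise
      (s := (Finset.univ : Finset (Quotient (sameCycleSetoid (pshuffle k n)))))
      (t := (k * n + 1).divisors.filter (· ≠ 1)) (f := PerfShufAux.Dq k n)
      (fun q _ => hmemb q)
    rw [hcc, ← Finset.card_univ, hfib]
    refine Finset.sum_congr rfl fun d hd => ?_
    rw [Finset.mem_filter, Nat.mem_divisors] at hd
    rw [← PerfShufAux.card_fiber k n d hd.1.1 hd.2, Nat.card_eq_fintype_card,
      Fintype.card_subtype]
end

section
/- Let k ≥ 2 and n ≥ 1 be integers and let x ∈ {1, …, kn}. Then the cardinality of the orbit of x under the (k,n)-perfect shuffle permutation σ_{k,n} (equivalently, the length of the cycle of σ_{k,n} containing x) equals ord_k((kn+1)/gcd(x, kn+1)). -/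
theorem perfect_shuffle_orbit_card (k n : ℕ) (hk : 2 ≤ k) (hn : 1 ≤ n)
    (x : {x : ℕ // x ∈ Finset.Icc 1 (k * n)}) :
    Nat.card {y // (pshuffle k n).SameCycle x y} =
      orderOf ((k : ZMod ((k * n + 1) / Nat.gcd x.1 (k * n + 1)))) := by
  classical
  set σ := pshuffle k n with hσ
  set m := k * n + 1 with hm
  set g := Nat.gcd x.1 m with hg
  set d := m / g with hd
  have hx := Finset.mem_Icc.mp x.2
  have hmpos : 0 < m := by omega
  have hgpos : 0 < g := Nat.gcd_pos_of_pos_left _ (by omega)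
  have hgdvdm : g ∣ m := Nat.gcd_dvd_right _ _
  have hgdvdx : g ∣ x.1 := Nat.gcd_dvd_left _ _
  have hdg : d * g = m := Nat.div_mul_cancel hgdvdm
  have hdpos : 0 < d := Nat.div_pos (Nat.le_of_dvd hmpos hgdvdm) hgpos
  haveI : NeZero d := ⟨hdpos.ne'⟩
  have hcom : Nat.Coprime m k :=
    (Nat.coprime_mul_left_add_left 1 k n).mpr (Nat.coprime_one_left k)
  have hcod : Nat.Coprime k d :=
    Nat.Coprime.coprime_dvd_right ⟨g, hdg.symm⟩ hcom.symm
  -- compute powers of the shuffle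
  have hpow : ∀ t : ℕ, ((σ ^ t) x).1 = k ^ t * x.1 % m := by
    intro t
    induction t with
    | zero => simp [Nat.mod_eq_of_lt (show x.1 < m by omega)]
    | succ t ih =>
      have hstep : ((σ ^ (t + 1)) x).1 = k * ((σ ^ t) x).1 % m := by
        rw [pow_succ', Equiv.Perm.mul_apply]; rfl
      rw [hstep, ih, Nat.mul_mod_mod, ← mul_assoc, ← pow_succ']
  -- key period characterization
  have hkey : ∀ t : ℕ, (σ ^ t) x = x ↔ (k : ZMod d) ^ t = 1 := by
    intro t
    have hcast : ((k : ZMod d) ^ t = 1) ↔ k ^ t ≡ 1 [MOD d] := by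
      rw [show ((k : ZMod d)) ^ t = ((k ^ t : ℕ) : ZMod d) by push_cast; ring,
        show (1 : ZMod d) = ((1 : ℕ) : ZMod d) by norm_cast,
        ZMod.natCast_eq_natCast_iff]
    rw [hcast]
    constructor
    · intro h
      have h1 : k ^ t * x.1 % m = x.1 % m := by
        rw [← hpow t, h, Nat.mod_eq_of_lt (show x.1 < m by omega)]
      have h2 : k ^ t * x.1 ≡ 1 * x.1 [MOD m] := by
        simpa [Nat.ModEq, one_mul] using h1
      have := Nat.ModEq.cancel_right_div_gcd hmpos h2
      rwa [Nat.gcd_comm] at this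
    · intro h
      obtain ⟨u, hu⟩ := hgdvdx
      have h1 : k ^ t * g ≡ 1 * g [MOD d * g] := Nat.ModEq.mul_right' g h
      rw [hdg] at h1
      have h2 : k ^ t * g * u ≡ 1 * g * u [MOD m] := Nat.ModEq.mul_right u h1
      have h3 : k ^ t * x.1 ≡ x.1 [MOD m] := by
        rw [hu]; simpa [mul_assoc, one_mul] using h2
      have : ((σ ^ t) x).1 = x.1 := by
        rw [hpow t]
        have := h3.symm
        unfold Nat.ModEq at this
        rw [Nat.mod_eq_of_lt (show x.1 < m by omega)] at this
        omega
      exact Subtype.ext this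
  -- finite order of k mod d
  have hfin : IsOfFinOrder ((k : ZMod d)) := by
    refine isOfFinOrder_iff_pow_eq_one.mpr ⟨Nat.totient d, Nat.totient_pos.mpr hdpos, ?_⟩
    have := Nat.ModEq.pow_totient hcod
    rw [show ((k : ZMod d)) ^ Nat.totient d = ((k ^ Nat.totient d : ℕ) : ZMod d) by
      push_cast; ring, show (1 : ZMod d) = ((1 : ℕ) : ZMod d) by norm_cast,
      ZMod.natCast_eq_natCast_iff]
    exact this
  have hopos : 0 < orderOf ((k : ZMod d)) := hfin.orderOf_pos
  -- orbit card = minimalPeriod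
  have hiter : ∀ t : ℕ, (⇑σ)^[t] x = (σ ^ t) x := fun t =>
    (Equiv.Perm.iterate_eq_pow σ t ▸ rfl)
  have hperiodic : Function.IsPeriodicPt (⇑σ) (orderOf ((k : ZMod d))) x := by
    unfold Function.IsPeriodicPt Function.IsFixedPt
    rw [hiter, hkey]
    exact pow_orderOf_eq_one _
  have hmp_pos : 0 < Function.minimalPeriod (⇑σ) x :=
    hperiodic.minimalPeriod_pos hopos
  have hmp_eq : Function.minimalPeriod (⇑σ) x = orderOf ((k : ZMod d)) := by
    refine le_antisymm (hperiodic.minimalPeriod_le hopos) ?_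
    have h1 : Function.IsPeriodicPt (⇑σ) (Function.minimalPeriod (⇑σ) x) x :=
      Function.isPeriodicPt_minimalPeriod _ _
    have h2 : (σ ^ Function.minimalPeriod (⇑σ) x) x = x := by
      rw [← hiter]; exact h1
    have h3 := (hkey _).mp h2
    exact Nat.le_of_dvd hmp_pos (orderOf_dvd_of_pow_eq_one h3)
  -- card of same-cycle set = card of orbit = minimal period
  have hscotype : Nat.card {y // σ.SameCycle x y} =
      Nat.card (MulAction.orbit (Subgroup.zpowers σ) x) := by
    refine Nat.card_congr (Equiv.subtypeEquivRight fun y => ?_)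
    constructor
    · rintro ⟨i, hi⟩
      exact ⟨⟨σ ^ i, i, rfl⟩, hi⟩
    · rintro ⟨⟨τ, i, rfl⟩, hτ⟩
      exact ⟨i, hτ⟩
  haveI : Fintype (MulAction.orbit (Subgroup.zpowers σ) x) := Fintype.ofFinite _
  have horb : Nat.card (MulAction.orbit (Subgroup.zpowers σ) x) =
      Function.minimalPeriod (⇑σ) x := by
    rw [Nat.card_eq_fintype_card, ← MulAction.minimalPeriod_eq_card]
    congr 1
  rw [hscotype, horb, hmp_eq]
end

section
/- Let k ≥ 2 and n ≥ 1 be integers and let d ≠ 1 be a divisor of kn+1. Then the permutation σ_{k,n} possesses exactly φ(d)/ord_k(d) orbits whose elements x satisfy (kn+1)/gcd(x, kn+1) = d; each such orbit has cardinality ord_k(d). -/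
private lemma psh_apply (k n : ℕ) (y : {x : ℕ // x ∈ Finset.Icc 1 (k * n)}) :
    ((pshuffle k n) y).1 = k * y.1 % (k * n + 1) := rfl

private lemma psh_pow_apply (k n m : ℕ) (y : {x : ℕ // x ∈ Finset.Icc 1 (k * n)}) :
    ((pshuffle k n ^ m) y).1 = k ^ m * y.1 % (k * n + 1) := by
  induction m generalizing y with
  | zero =>
    have hy := Finset.mem_Icc.mp y.2
    simp [Nat.mod_eq_of_lt (by omega : y.1 < k * n + 1)]
  | succ m ih =>
    have : (pshuffle k n ^ (m + 1)) y = (pshuffle k n ^ m) ((pshuffle k n) y) := by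
      rw [pow_succ, Equiv.Perm.mul_apply]
    rw [this, ih, psh_apply, Nat.mul_mod_mod]
    ring_nf

private lemma psh_sameCycle_iff (k n : ℕ) (x y : {x : ℕ // x ∈ Finset.Icc 1 (k * n)}) :
    (pshuffle k n).SameCycle x y ↔ ∃ m : ℕ, (pshuffle k n ^ m) x = y := by
  classical
  constructor
  · intro h
    obtain ⟨i, _, _, hi⟩ := Equiv.Perm.SameCycle.exists_pow_eq _ h
    exact ⟨i, hi⟩
  · rintro ⟨m, rfl⟩
    exact ⟨(m : ℤ), by simp [zpow_natCast]⟩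

theorem perfect_shuffle_orbits_of_divisor (k n d : ℕ) (hk : 2 ≤ k) (hn : 1 ≤ n)
    (hd : d ∣ k * n + 1) (hd1 : d ≠ 1) :
    Nat.card {q : Quotient (sameCycleSetoid (pshuffle k n)) //
        ∀ x, Quotient.mk (sameCycleSetoid (pshuffle k n)) x = q →
          (k * n + 1) / Nat.gcd x.1 (k * n + 1) = d} =
      Nat.totient d / orderOf (k : ZMod d) ∧
    ∀ x : {x : ℕ // x ∈ Finset.Icc 1 (k * n)},
      (k * n + 1) / Nat.gcd x.1 (k * n + 1) = d →
        Nat.card {y // (pshuffle k n).SameCycle x y} = orderOf (k : ZMod d) := by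
  classical
  set N := k * n + 1 with hNdef
  have hN3 : 3 ≤ N := by have := Nat.mul_le_mul hk hn; omega
  obtain ⟨e, hNe⟩ := id hd
  have hd0 : d ≠ 0 := by rintro rfl; rw [zero_mul] at hNe; omega
  have hd2 : 2 ≤ d := by omega
  have he : 0 < e := Nat.pos_of_ne_zero (by rintro rfl; rw [mul_zero] at hNe; omega)
  have hNed : N = e * d := by rw [hNe, mul_comm]
  haveI : NeZero d := ⟨hd0⟩
  haveI : Fact (1 < d) := ⟨by omega⟩
  have hNk : Nat.Coprime N k :=
    (Nat.coprime_mul_left_add_left 1 k n).mpr (Nat.coprime_one_left k)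
  have hkd : Nat.Coprime k d := Nat.Coprime.coprime_dvd_right hd hNk.symm
  set K : (ZMod d)ˣ := ZMod.unitOfCoprime k hkd with hK
  have hcoeK : ((K : (ZMod d)ˣ) : ZMod d) = (k : ZMod d) := ZMod.coe_unitOfCoprime k hkd
  have hordK : orderOf (k : ZMod d) = orderOf K := by rw [← hcoeK, orderOf_units]
  -- structure of elements satisfying the gcd condition
  have hgcd_eq : ∀ x : {x : ℕ // x ∈ Finset.Icc 1 (k * n)},
      N / Nat.gcd x.1 N = d → Nat.gcd x.1 N = e := by
    intro x hx
    have hg : Nat.gcd x.1 N ∣ N := Nat.gcd_dvd_right _ _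
    have h1 : N / Nat.gcd x.1 N * Nat.gcd x.1 N = N := Nat.div_mul_cancel hg
    rw [hx] at h1
    exact Nat.eq_of_mul_eq_mul_left (show 0 < d by omega) (h1.trans hNe)
  have hstruct : ∀ x : {x : ℕ // x ∈ Finset.Icc 1 (k * n)},
      N / Nat.gcd x.1 N = d →
      x.1 = e * (x.1 / e) ∧ Nat.Coprime (x.1 / e) d ∧ 1 ≤ x.1 / e ∧ x.1 / e < d := by
    intro x hx
    have hge := hgcd_eq x hx
    have hdvd : e ∣ x.1 := hge ▸ Nat.gcd_dvd_left _ _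
    have hx1 : x.1 = e * (x.1 / e) := (Nat.mul_div_cancel' hdvd).symm
    have hmem := Finset.mem_Icc.mp x.2
    have hcop : Nat.Coprime (x.1 / e) d := by
      have h2 : Nat.gcd (e * (x.1 / e)) (e * d) = e * Nat.gcd (x.1 / e) d :=
        Nat.gcd_mul_left e _ _
      rw [← hx1, ← hNed, hge] at h2
      have h3 : e * Nat.gcd (x.1 / e) d = e * 1 := by rw [mul_one]; exact h2.symm
      exact Nat.eq_of_mul_eq_mul_left he h3
    have hu1 : 1 ≤ x.1 / e := by
      rcases Nat.eq_zero_or_pos (x.1 / e) with h | h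
      · rw [h, mul_zero] at hx1; omega
      · exact h
    have hu2 : x.1 / e < d := by
      by_contra hcon
      push_neg at hcon
      have : e * d ≤ e * (x.1 / e) := Nat.mul_le_mul_left e hcon
      rw [← hx1, ← hNed] at this
      omega
    exact ⟨hx1, hcop, hu1, hu2⟩
  have hmem_of : ∀ u : ℕ, 1 ≤ u → u < d → e * u ∈ Finset.Icc 1 (k * n) := by
    intro u h1 h2
    have hA : e * u + e = e * (u + 1) := by ring
    have hB : e * (u + 1) ≤ e * d := Nat.mul_le_mul_left e (by omega)
    have hC : 1 ≤ e * u := Nat.mul_le_mul he h1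
    rw [← hNed] at hB
    exact Finset.mem_Icc.mpr ⟨hC, by omega⟩
  have hcond_of : ∀ u : ℕ, 1 ≤ u → u < d → Nat.Coprime u d →
      N / Nat.gcd (e * u) N = d := by
    intro u h1 h2 hcop
    have hg : Nat.gcd (e * u) N = e := by
      rw [hNed, Nat.gcd_mul_left, hcop.gcd_eq_one, mul_one]
    rw [hg, hNed, Nat.mul_div_cancel_left d he]
  -- orbit formula
  have horbit : ∀ (x : {x : ℕ // x ∈ Finset.Icc 1 (k * n)}),
      N / Nat.gcd x.1 N = d → ∀ m : ℕ,
      ((pshuffle k n ^ m) x).1 = e * ((k ^ m * (x.1 / e)) % d) := by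
    intro x hx m
    obtain ⟨h1, _, _, _⟩ := hstruct x hx
    rw [psh_pow_apply, ← hNdef]
    conv_lhs => rw [h1]
    rw [show k ^ m * (e * (x.1 / e)) = e * (k ^ m * (x.1 / e)) by ring, hNed,
      Nat.mul_mod_mul_left]
  have hval : ∀ (v : (ZMod d)ˣ) (m : ℕ),
      (((K ^ m * v : (ZMod d)ˣ) : ZMod d)).val = (k ^ m * (v : ZMod d).val) % d := by
    intro v m
    have h1 : ((K ^ m * v : (ZMod d)ˣ) : ZMod d)
        = ((k ^ m * (v : ZMod d).val : ℕ) : ZMod d) := by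
      push_cast [ZMod.natCast_val, ZMod.cast_id, hcoeK]
      rfl
    rw [h1, ZMod.val_natCast]
  have hval1 : ∀ v : (ZMod d)ˣ, 1 ≤ (v : ZMod d).val ∧ (v : ZMod d).val < d := by
    intro v
    have h0 : (v : ZMod d) ≠ 0 := Units.ne_zero v
    have hlt := ZMod.val_lt (v : ZMod d)
    have h1 : (v : ZMod d).val ≠ 0 := fun h => h0 ((ZMod.val_eq_zero _).mp h)
    omega
  set Y : (ZMod d)ˣ → {x : ℕ // x ∈ Finset.Icc 1 (k * n)} :=
    fun v => ⟨e * (v : ZMod d).val, hmem_of _ (hval1 v).1 (hval1 v).2⟩ with hY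
  have hYval : ∀ v : (ZMod d)ˣ, (Y v).1 = e * (v : ZMod d).val := fun v => rfl
  have hYcond : ∀ v : (ZMod d)ˣ, N / Nat.gcd (Y v).1 N = d := fun v =>
    hcond_of _ (hval1 v).1 (hval1 v).2 (ZMod.val_coe_unit_coprime v)
  have hYdiv : ∀ v : (ZMod d)ˣ, (Y v).1 / e = (v : ZMod d).val := fun v =>
    Nat.mul_div_cancel_left _ he
  have hkey : ∀ (v : (ZMod d)ˣ) (m : ℕ), (pshuffle k n ^ m) (Y v) = Y (K ^ m * v) := by
    intro v m
    apply Subtype.ext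
    rw [horbit (Y v) (hYcond v) m, hYdiv v, hYval, hval]
  have hYinj : Function.Injective Y := by
    intro a b hab
    have h2 : e * (a : ZMod d).val = e * (b : ZMod d).val := congrArg Subtype.val hab
    exact Units.ext (ZMod.val_injective d (Nat.eq_of_mul_eq_mul_left he h2))
  have hYeq : ∀ (x : {x : ℕ // x ∈ Finset.Icc 1 (k * n)})
      (hx : N / Nat.gcd x.1 N = d),
      Y (ZMod.unitOfCoprime (x.1 / e) (hstruct x hx).2.1) = x := by
    intro x hx
    obtain ⟨h1, hcop, hu1, hu2⟩ := hstruct x hx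
    apply Subtype.ext
    rw [hYval]
    rw [show ((ZMod.unitOfCoprime (x.1 / e) (hstruct x hx).2.1 : (ZMod d)ˣ) : ZMod d)
        = ((x.1 / e : ℕ) : ZMod d) from ZMod.coe_unitOfCoprime _ _]
    rw [ZMod.val_natCast, Nat.mod_eq_of_lt hu2, ← h1]
  have hgcd_inv : ∀ x y : {x : ℕ // x ∈ Finset.Icc 1 (k * n)},
      (pshuffle k n).SameCycle x y → Nat.gcd x.1 N = Nat.gcd y.1 N := by
    intro x y h
    obtain ⟨m, rfl⟩ := (psh_sameCycle_iff k n x y).mp h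
    rw [psh_pow_apply, ← hNdef]
    have hc : Nat.Coprime (k ^ m) N := Nat.Coprime.pow_left m hNk.symm
    rw [show Nat.gcd (k ^ m * x.1 % N) N = Nat.gcd (k ^ m * x.1) N from
      (Nat.gcd_rec N _).symm.trans (Nat.gcd_comm N _),
      Nat.Coprime.gcd_mul_left_cancel x.1 hc]
  constructor
  · -- counting orbits
    have hresp : ∀ a b : (ZMod d)ˣ, (QuotientGroup.leftRel (Subgroup.zpowers K)) a b →
        Quotient.mk (sameCycleSetoid (pshuffle k n)) (Y a)
          = Quotient.mk (sameCycleSetoid (pshuffle k n)) (Y b) := by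
      intro a b hab
      rw [QuotientGroup.leftRel_apply] at hab
      obtain ⟨m, hm⟩ := mem_powers_iff_mem_zpowers.mpr hab
      have hm' : K ^ m = a⁻¹ * b := hm
      have hb : K ^ m * a = b := by
        rw [hm', mul_comm (a⁻¹ * b) a, mul_inv_cancel_left]
      apply Quotient.sound
      show (pshuffle k n).SameCycle (Y a) (Y b)
      rw [← hb]
      exact (psh_sameCycle_iff k n _ _).mpr ⟨m, hkey a m⟩
    have hmkcond : ∀ v : (ZMod d)ˣ,
        ∀ x' : {x : ℕ // x ∈ Finset.Icc 1 (k * n)},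
        Quotient.mk (sameCycleSetoid (pshuffle k n)) x'
          = Quotient.mk (sameCycleSetoid (pshuffle k n)) (Y v) →
        N / Nat.gcd x'.1 N = d := by
      intro v x' hx'
      have hsc : (pshuffle k n).SameCycle x' (Y v) := Quotient.exact hx'
      rw [hgcd_inv _ _ hsc]
      exact hYcond v
    set F : (ZMod d)ˣ ⧸ Subgroup.zpowers K →
        {q : Quotient (sameCycleSetoid (pshuffle k n)) //
          ∀ x, Quotient.mk (sameCycleSetoid (pshuffle k n)) x = q →
            N / Nat.gcd x.1 N = d} :=
      Quotient.lift
        (fun v => ⟨Quotient.mk (sameCycleSetoid (pshuffle k n)) (Y v), hmkcond v⟩)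
        (fun a b hab => Subtype.ext (hresp a b hab)) with hF
    have hFbij : Function.Bijective F := by
      constructor
      · refine Quotient.ind₂ ?_
        intro a b hab
        have h1 : Quotient.mk (sameCycleSetoid (pshuffle k n)) (Y a)
            = Quotient.mk (sameCycleSetoid (pshuffle k n)) (Y b) :=
          congrArg Subtype.val hab
        have h2 : (pshuffle k n).SameCycle (Y a) (Y b) := Quotient.exact h1
        obtain ⟨m, hm⟩ := (psh_sameCycle_iff k n _ _).mp h2
        rw [hkey a m] at hm
        have h4 : K ^ m * a = b := hYinj hm
        have h5 : a⁻¹ * b = K ^ m := by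
          rw [← h4, mul_comm (K ^ m) a, inv_mul_cancel_left]
        exact Quotient.sound (QuotientGroup.leftRel_apply.mpr
          (h5 ▸ Subgroup.pow_mem _ (Subgroup.mem_zpowers K) m))
      · intro q
        obtain ⟨x, hxq⟩ := Quotient.exists_rep q.1
        have hxc : N / Nat.gcd x.1 N = d := q.2 x hxq
        refine ⟨Quotient.mk _ (ZMod.unitOfCoprime (x.1 / e) (hstruct x hxc).2.1), ?_⟩
        apply Subtype.ext
        show Quotient.mk (sameCycleSetoid (pshuffle k n))
          (Y (ZMod.unitOfCoprime (x.1 / e) (hstruct x hxc).2.1)) = q.1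
        rw [hYeq x hxc, hxq]
    have hcard1 := Nat.card_eq_of_bijective F hFbij
    rw [← hcard1]
    have hpos : 0 < orderOf K := orderOf_pos K
    have htot : Nat.totient d = orderOf K * (Subgroup.zpowers K).index := by
      have h1 := Subgroup.card_mul_index (Subgroup.zpowers K)
      rw [Nat.card_zpowers] at h1
      have h2 : Nat.card (ZMod d)ˣ = Nat.totient d := by
        rw [Nat.card_eq_fintype_card, ZMod.card_units_eq_totient]
      rw [← h2]; exact h1.symm
    rw [hordK, htot, Nat.mul_div_cancel_left _ hpos]
    exact (Subgroup.index_eq_card _).symm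
  · -- orbit sizes
    intro x hx
    obtain ⟨hx1, hxcop, hxu1, hxu2⟩ := hstruct x hx
    set U : (ZMod d)ˣ := ZMod.unitOfCoprime (x.1 / e) hxcop with hU
    have hYU : Y U = x := hYeq x hx
    have hcardC : Nat.card {v : (ZMod d)ˣ // ∃ m : ℕ, K ^ m * U = v}
        = orderOf (k : ZMod d) := by
      have hb : Function.Bijective (fun w : Subgroup.zpowers K =>
          (⟨w.1 * U, by
            obtain ⟨m, hm⟩ := mem_powers_iff_mem_zpowers.mpr w.2
            have hm' : K ^ m = w.1 := hm
            exact ⟨m, by rw [hm']⟩⟩ :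
          {v : (ZMod d)ˣ // ∃ m : ℕ, K ^ m * U = v})) := by
        constructor
        · intro a b hab
          have h1 : a.1 * U = b.1 * U := congrArg Subtype.val hab
          exact Subtype.ext (mul_right_cancel h1)
        · rintro ⟨v, m, hm⟩
          exact ⟨⟨K ^ m, Subgroup.pow_mem _ (Subgroup.mem_zpowers K) m⟩, Subtype.ext hm⟩
      rw [← Nat.card_eq_of_bijective _ hb, Nat.card_zpowers, hordK]
    have hb2 : Function.Bijective (fun v : {v : (ZMod d)ˣ // ∃ m : ℕ, K ^ m * U = v} =>
        (⟨Y v.1, by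
          obtain ⟨m, hm⟩ := v.2
          exact (psh_sameCycle_iff k n _ _).mpr ⟨m, by rw [← hYU, hkey U m, hm]⟩⟩ :
        {y // (pshuffle k n).SameCycle x y})) := by
      constructor
      · intro a b hab
        exact Subtype.ext (hYinj (congrArg Subtype.val hab))
      · rintro ⟨y, hy⟩
        obtain ⟨m, hm⟩ := (psh_sameCycle_iff k n x y).mp hy
        refine ⟨⟨K ^ m * U, m, rfl⟩, Subtype.ext ?_⟩
        show Y (K ^ m * U) = y
        rw [← hkey U m, hYU, hm]
    exact (Nat.card_eq_of_bijective _ hb2).symm.trans hcardC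
end

section
/- Let k ≥ 2, n ≥ 1 and r ≥ 1 be integers. A tuple (a_0, a_1, …, a_{r−1}) of elements of {1, …, kn} is a cycle of the (k,n)-perfect shuffle permutation σ_{k,n} (that is, a_{i+1} = σ_{k,n}(a_i) for 0 ≤ i < r−1, σ_{k,n}(a_{r−1}) = a_0, and the a_i are pairwise distinct) if and only if there exist a divisor d of kn+1 with d ≠ 1 and an integer a ∈ {1, …, d−1} with gcd(a, d) = 1 such that r = ord_k(d) and a_i ≡ a·((kn+1)/d)·k^i (mod kn+1) for every i ∈ {0, …, r−1}. -/
lemma myOrder_dvd_iff (k d m : ℕ) (hk : 2 ≤ k) :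
    orderOf (k : ZMod d) ∣ m ↔ d ∣ k ^ m - 1 := by
  rw [orderOf_dvd_iff_pow_eq_one]
  have h1 : ((k : ZMod d)) ^ m = ((k ^ m : ℕ) : ZMod d) := by push_cast; ring
  rw [h1, show (1 : ZMod d) = ((1 : ℕ) : ZMod d) by norm_cast,
    ZMod.natCast_eq_natCast_iff]
  constructor
  · intro h; exact (Nat.modEq_iff_dvd' (Nat.one_le_pow m k (by omega))).mp h.symm
  · intro h; exact ((Nat.modEq_iff_dvd' (Nat.one_le_pow m k (by omega))).mpr h).symm

lemma myOrder_pos (k d : ℕ) (hk : 2 ≤ k) (hd2 : 2 ≤ d) (hco : Nat.Coprime k d) :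
    0 < orderOf (k : ZMod d) := by
  have htot : k ^ Nat.totient d ≡ 1 [MOD d] := Nat.ModEq.pow_totient hco
  have h : orderOf (k : ZMod d) ∣ Nat.totient d :=
    (myOrder_dvd_iff k d _ hk).mpr
      ((Nat.modEq_iff_dvd' (Nat.one_le_pow _ k (by omega))).mp htot.symm)
  have ht : 0 < Nat.totient d := Nat.totient_pos.mpr (by omega)
  rcases Nat.eq_zero_or_pos (orderOf (k : ZMod d)) with h0 | h0
  · rw [h0] at h; exact absurd (Nat.eq_zero_of_zero_dvd h) (by omega)
  · exact h0

lemma my_le_mul_pow (x k r : ℕ) (hk : 1 ≤ k) : x ≤ x * k ^ r :=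
  Nat.le_mul_of_pos_right x (pow_pos hk r)

theorem perfect_shuffle_cycle_description (k n r : ℕ) (hk : 2 ≤ k) (hn : 1 ≤ n) (hr : 1 ≤ r)
    (a : Fin r → ℕ) (ha : ∀ i, a i ∈ Finset.Icc 1 (k * n)) :
    ((∀ i : Fin r, a ⟨(i.1 + 1) % r, Nat.mod_lt _ (by omega)⟩ = k * a i % (k * n + 1)) ∧
        Function.Injective a) ↔
      ∃ d, d ∣ k * n + 1 ∧ d ≠ 1 ∧
        ∃ b, 1 ≤ b ∧ b ≤ d - 1 ∧ Nat.gcd b d = 1 ∧ r = orderOf (k : ZMod d) ∧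
          ∀ i : Fin r, a i ≡ b * ((k * n + 1) / d) * k ^ (i : ℕ) [MOD k * n + 1] := by
  have hN : 3 ≤ k * n + 1 := by nlinarith
  have hkN : Nat.Coprime k (k * n + 1) :=
    ((Nat.coprime_mul_left_add_left 1 k n).mpr (Nat.coprime_one_left k)).symm
  constructor
  · rintro ⟨hrec, hinj⟩
    have hr0 : 0 < r := hr
    set x := a ⟨0, hr0⟩ with hxdef
    obtain ⟨hx1, hx2⟩ := Finset.mem_Icc.mp (ha ⟨0, hr0⟩)
    set g := Nat.gcd x (k * n + 1) with hgdef
    have hgx : g ∣ x := Nat.gcd_dvd_left _ _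
    have hgN : g ∣ k * n + 1 := Nat.gcd_dvd_right _ _
    have hgpos : 0 < g := Nat.gcd_pos_of_pos_left _ (by omega)
    have hglex : g ≤ x := Nat.le_of_dvd (by omega) hgx
    set d := (k * n + 1) / g with hddef
    set b := x / g with hbdef
    have hdg : d * g = k * n + 1 := Nat.div_mul_cancel hgN
    have hbg : b * g = x := Nat.div_mul_cancel hgx
    have hd2 : 2 ≤ d := by
      by_contra hcon
      have h1 : d * g ≤ 1 * g := Nat.mul_le_mul_right g (by omega)
      rw [one_mul] at h1
      omega
    have hkd : Nat.Coprime k d := hkN.coprime_dvd_right ⟨g, hdg.symm⟩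
    have hbd : Nat.Coprime b d := Nat.coprime_div_gcd_div_gcd hgpos
    have hb1 : 1 ≤ b := by
      by_contra hcon
      have hb0 : b = 0 := Nat.eq_zero_of_not_pos hcon
      rw [hb0, zero_mul] at hbg
      omega
    have hbled : b ≤ d - 1 := by
      by_contra hcon
      have h1 : d * g ≤ b * g := Nat.mul_le_mul_right g (by omega)
      omega
    have hstep : ∀ i : ℕ, ∀ hi : i < r, a ⟨i, hi⟩ ≡ x * k ^ i [MOD k * n + 1] := by
      intro i
      induction i with
      | zero => intro hi; simpa using Nat.ModEq.refl x
      | succ i ih =>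
        intro hi
        have hi' : i < r := by omega
        have h1 : a ⟨(i + 1) % r, Nat.mod_lt _ (by omega)⟩ = k * a ⟨i, hi'⟩ % (k * n + 1) :=
          hrec ⟨i, hi'⟩
        have h2 : (⟨(i + 1) % r, Nat.mod_lt _ (by omega)⟩ : Fin r) = ⟨i + 1, hi⟩ :=
          Fin.ext (Nat.mod_eq_of_lt hi)
        rw [h2] at h1
        calc a ⟨i + 1, hi⟩ = k * a ⟨i, hi'⟩ % (k * n + 1) := h1
          _ ≡ k * a ⟨i, hi'⟩ [MOD k * n + 1] := Nat.mod_modEq _ _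
          _ ≡ k * (x * k ^ i) [MOD k * n + 1] := (ih hi').mul_left k
          _ = x * k ^ (i + 1) := by ring
    have hwrap : x ≡ x * k ^ r [MOD k * n + 1] := by
      have h1 : a ⟨(r - 1 + 1) % r, Nat.mod_lt _ (by omega)⟩
          = k * a ⟨r - 1, by omega⟩ % (k * n + 1) := hrec ⟨r - 1, by omega⟩
      have h2 : (⟨(r - 1 + 1) % r, Nat.mod_lt _ (by omega)⟩ : Fin r) = ⟨0, hr0⟩ := by
        apply Fin.ext
        show (r - 1 + 1) % r = 0
        have hre : r - 1 + 1 = r := by omega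
        rw [hre, Nat.mod_self]
      rw [h2] at h1
      calc x = k * a ⟨r - 1, by omega⟩ % (k * n + 1) := h1
        _ ≡ k * a ⟨r - 1, by omega⟩ [MOD k * n + 1] := Nat.mod_modEq _ _
        _ ≡ k * (x * k ^ (r - 1)) [MOD k * n + 1] := (hstep (r - 1) (by omega)).mul_left k
        _ = x * k ^ (r - 1 + 1) := by ring
        _ = x * k ^ r := by rw [show r - 1 + 1 = r from by omega]
    have hdvd_r : d ∣ k ^ r - 1 := by
      have h1 : (k * n + 1) ∣ x * k ^ r - x :=
        (Nat.modEq_iff_dvd' (my_le_mul_pow x k r (by omega))).mp hwrap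
      have h2 : b * (k ^ r - 1) * g = x * k ^ r - x := by
        rw [mul_right_comm, hbg, Nat.mul_sub, Nat.mul_one]
      rw [← h2, ← hdg] at h1
      have h3 : d ∣ b * (k ^ r - 1) := (Nat.mul_dvd_mul_iff_right hgpos).mp h1
      exact hbd.symm.dvd_of_dvd_mul_left h3
    have hordvd : orderOf (k : ZMod d) ∣ r := (myOrder_dvd_iff k d r hk).mpr hdvd_r
    have hordpos : 0 < orderOf (k : ZMod d) := myOrder_pos k d hk hd2 hkd
    have hler : orderOf (k : ZMod d) ≤ r := Nat.le_of_dvd (by omega) hordvd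
    have hreq : r = orderOf (k : ZMod d) := by
      by_contra hne
      have hlt : orderOf (k : ZMod d) < r := by omega
      set r' := orderOf (k : ZMod d) with hr'def
      have hd' : d ∣ k ^ r' - 1 := (myOrder_dvd_iff k d r' hk).mp dvd_rfl
      have hNd : (k * n + 1) ∣ x * k ^ r' - x := by
        have h2 : b * (k ^ r' - 1) * g = x * k ^ r' - x := by
          rw [mul_right_comm, hbg, Nat.mul_sub, Nat.mul_one]
        rw [← h2, ← hdg]
        exact mul_dvd_mul (hd'.mul_left b) dvd_rfl
      have hmw : a ⟨r', hlt⟩ ≡ x [MOD k * n + 1] := by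
        have hle : x ≤ x * k ^ r' := my_le_mul_pow x k r' (by omega)
        have hh := (Nat.modEq_iff_dvd' hle).mpr hNd
        exact (hstep r' hlt).trans hh.symm
      obtain ⟨h1', h2'⟩ := Finset.mem_Icc.mp (ha ⟨r', hlt⟩)
      have heq : a ⟨r', hlt⟩ = x := by
        have hm : a ⟨r', hlt⟩ % (k * n + 1) = x % (k * n + 1) := hmw
        rwa [Nat.mod_eq_of_lt (by omega), Nat.mod_eq_of_lt (by omega)] at hm
      have hfe := hinj (heq.trans hxdef)
      have : r' = 0 := congrArg Fin.val hfe
      omega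
    refine ⟨d, ⟨g, hdg.symm⟩, by omega, b, hb1, hbled, hbd, hreq, ?_⟩
    intro i
    have hgd : (k * n + 1) / d = g := by
      rw [← hdg, Nat.mul_div_cancel_left g (by omega)]
    rw [hgd, hbg]
    exact hstep i.1 i.2
  · rintro ⟨d, hdN, hd1, b, hb1, hbled, hgcd, hre, hcong⟩
    have hdpos : 0 < d := Nat.pos_of_dvd_of_pos hdN (by omega)
    have hd2 : 2 ≤ d := by omega
    have hkd : Nat.Coprime k d := hkN.coprime_dvd_right hdN
    have hordpos : 0 < orderOf (k : ZMod d) := myOrder_pos k d hk hd2 hkd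
    have hdr : d ∣ k ^ r - 1 := (myOrder_dvd_iff k d r hk).mp (by rw [hre])
    obtain ⟨g, hgeq⟩ := hdN
    have hgd : (k * n + 1) / d = g := by rw [hgeq, Nat.mul_div_cancel_left g hdpos]
    have hgpos : 0 < g := by
      rcases Nat.eq_zero_or_pos g with h | h
      · rw [h, mul_zero] at hgeq; omega
      · exact h
    simp only [hgd] at hcong
    have hbd : Nat.Coprime b d := hgcd
    have hwrap : b * g ≡ b * g * k ^ r [MOD k * n + 1] := by
      have hle : b * g ≤ b * g * k ^ r := my_le_mul_pow _ k r (by omega)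
      refine (Nat.modEq_iff_dvd' hle).mpr ?_
      have h2 : b * (k ^ r - 1) * g = b * g * k ^ r - b * g := by
        rw [mul_right_comm, Nat.mul_sub, Nat.mul_one]
      rw [← h2, hgeq]
      exact mul_dvd_mul (hdr.mul_left b) dvd_rfl
    constructor
    · intro i
      have h1 := hcong i
      have h2 := hcong ⟨(i.1 + 1) % r, Nat.mod_lt _ (by omega)⟩
      have hval : b * g * k ^ (((⟨(i.1 + 1) % r, Nat.mod_lt _ (by omega)⟩ : Fin r)) : ℕ)
          = b * g * k ^ ((i.1 + 1) % r) := rfl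
      rw [hval] at h2
      have key : b * g * k ^ ((i.1 + 1) % r) ≡ k * (b * g * k ^ (i : ℕ)) [MOD k * n + 1] := by
        by_cases hc : i.1 + 1 < r
        · rw [Nat.mod_eq_of_lt hc,
            show k * (b * g * k ^ (i : ℕ)) = b * g * k ^ ((i : ℕ) + 1) by ring]
        · have hier : i.1 + 1 = r := by omega
          rw [hier,
            show k * (b * g * k ^ (i : ℕ)) = b * g * k ^ ((i : ℕ) + 1) by ring,
            show (i : ℕ) + 1 = r from hier, Nat.mod_self, pow_zero, mul_one]
          exact hwrap
      have h3 : a ⟨(i.1 + 1) % r, Nat.mod_lt _ (by omega)⟩ ≡ k * a i [MOD k * n + 1] :=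
        h2.trans (key.trans ((h1.mul_left k).symm))
      obtain ⟨hj1, hj2⟩ := Finset.mem_Icc.mp (ha ⟨(i.1 + 1) % r, Nat.mod_lt _ (by omega)⟩)
      have h4 : a ⟨(i.1 + 1) % r, Nat.mod_lt _ (by omega)⟩ % (k * n + 1)
          = k * a i % (k * n + 1) := h3
      rwa [Nat.mod_eq_of_lt (by omega)] at h4
    · have hlem : ∀ i j : Fin r, (i : ℕ) < (j : ℕ) → a i ≠ a j := by
        intro i j hij heq
        have h1 := hcong i
        have h2 := hcong j
        have h3 : b * g * k ^ (i : ℕ) ≡ b * g * k ^ (j : ℕ) [MOD k * n + 1] :=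
          (heq ▸ h1.symm).trans h2
        set m := (j : ℕ) - (i : ℕ) with hmdef
        have hm1 : 1 ≤ m := by omega
        have hmr : m < r := by have := j.isLt; omega
        have hle : b * g * k ^ (i : ℕ) ≤ b * g * k ^ (j : ℕ) :=
          Nat.mul_le_mul_left _ (Nat.pow_le_pow_right (by omega) (by omega))
        have h4 : (k * n + 1) ∣ b * g * k ^ (j : ℕ) - b * g * k ^ (i : ℕ) :=
          (Nat.modEq_iff_dvd' hle).mp h3
        have h5 : b * g * k ^ (j : ℕ) - b * g * k ^ (i : ℕ)
            = b * k ^ (i : ℕ) * (k ^ m - 1) * g := by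
          have hpow : (j : ℕ) = (i : ℕ) + m := by omega
          rw [hpow, pow_add,
            show b * g * (k ^ (i : ℕ) * k ^ m) = b * k ^ (i : ℕ) * g * k ^ m by ring,
            show b * g * k ^ (i : ℕ) = b * k ^ (i : ℕ) * g * 1 by ring,
            ← Nat.mul_sub,
            show b * k ^ (i : ℕ) * g * (k ^ m - 1) = b * k ^ (i : ℕ) * (k ^ m - 1) * g by ring]
        rw [h5, hgeq] at h4
        have h6 : d ∣ b * k ^ (i : ℕ) * (k ^ m - 1) :=
          (Nat.mul_dvd_mul_iff_right hgpos).mp h4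
        have hco2 : Nat.Coprime d (b * k ^ (i : ℕ)) :=
          Nat.Coprime.mul_right hbd.symm (hkd.symm.pow_right _)
        have h7 : d ∣ k ^ m - 1 := hco2.dvd_of_dvd_mul_left h6
        have h8 : orderOf (k : ZMod d) ∣ m := (myOrder_dvd_iff k d m hk).mpr h7
        have h9 := Nat.le_of_dvd (by omega) h8
        rw [← hre] at h9
        omega
      intro i j hij
      rcases Nat.lt_trichotomy (i : ℕ) (j : ℕ) with h | h | h
      · exact absurd hij (hlem i j h)
      · exact Fin.ext h
      · exact absurd hij.symm (hlem j i h)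
end

section
/- Let k ≥ 2 and n ≥ 1 be integers. Then the number of inversions of the (k,n)-perfect shuffle permutation σ_{k,n}, i.e., the number of pairs (i, j) with 1 ≤ i < j ≤ kn and σ_{k,n}(i) > σ_{k,n}(j), equals ((k−1)k/2)·(n(n+1)/2). -/
lemma psi_mod (k n c u : ℕ) (hc : c < k) (hu1 : 1 ≤ u) (hun : u ≤ n) :
    k * (c * n + u) % (k * n + 1) = k * u - c := by
  have h1 : k ≤ k * u := Nat.le_mul_of_pos_right k (by omega)
  have h2 : k * u ≤ k * n := Nat.mul_le_mul_left k hun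
  have key : k * (c * n + u) = c * (k * n + 1) + (k * u - c) := by
    zify [show c ≤ k * u by omega]
    ring
  rw [key, Nat.mul_add_mod', Nat.mod_eq_of_lt (by omega)]

lemma add_mul_inj {n c c' u u' : ℕ} (hu1 : 1 ≤ u) (hun : u ≤ n) (hu1' : 1 ≤ u')
    (hun' : u' ≤ n) (h : c * n + u = c' * n + u') : c = c' ∧ u = u' := by
  have hcc : c = c' := by
    by_contra hne
    rcases Nat.lt_or_ge c c' with h1 | h1
    · have h2 : (c + 1) * n ≤ c' * n := Nat.mul_le_mul_right n h1
      have h3 : (c + 1) * n = c * n + n := by ring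
      linarith
    · have h1' : c' < c := by omega
      have h2 : (c' + 1) * n ≤ c * n := Nat.mul_le_mul_right n h1'
      have h3 : (c' + 1) * n = c' * n + n := by ring
      linarith
  subst hcc
  exact ⟨rfl, Nat.add_left_cancel h⟩

lemma decomp (k n i : ℕ) (hn : 1 ≤ n) (h1 : 1 ≤ i) (h2 : i ≤ k * n) :
    ∃ c u, c < k ∧ 1 ≤ u ∧ u ≤ n ∧ i = c * n + u := by
  refine ⟨(i - 1) / n, i - (i - 1) / n * n, ?_, ?_, ?_, ?_⟩ <;>
  · have hd := Nat.div_add_mod (i - 1) n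
    have hm : (i - 1) % n < n := Nat.mod_lt _ (by omega)
    have hle : (i - 1) / n * n ≤ i - 1 := Nat.div_mul_le_self _ _
    have hd2 : (i - 1) / n * n = n * ((i - 1) / n) := Nat.mul_comm _ _
    first
    | (by_contra hc
       push_neg at hc
       have : k * n ≤ (i - 1) / n * n := Nat.mul_le_mul_right n hc
       omega)
    | omega

lemma perm_pair_iff (k n c d u v : ℕ) (hk : 2 ≤ k) (hc : c < k) (hd : d < k)
    (hu1 : 1 ≤ u) (hun : u ≤ n) (hv1 : 1 ≤ v) (hvn : v ≤ n) :
    (c * n + u < d * n + v ∧ k * v - d < k * u - c) ↔ (c < d ∧ v ≤ u) := by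
  have hku : k ≤ k * u := Nat.le_mul_of_pos_right k (by omega)
  have hkv : k ≤ k * v := Nat.le_mul_of_pos_right k (by omega)
  constructor
  · rintro ⟨hlt, hinv⟩
    zify [show c ≤ k * u by omega, show d ≤ k * v by omega] at hinv
    have hcd : c < d := by
      rcases lt_trichotomy c d with h | h | h
      · exact h
      · exfalso
        subst h
        have huv : u < v := by omega
        have : k * (u + 1) ≤ k * v := Nat.mul_le_mul_left k huv
        have hkk : k * (u + 1) = k * u + k := by ring
        push_cast at hinv
        linarith [hinv]
      · exfalso
        have h2 : (d + 1) * n ≤ c * n := Nat.mul_le_mul_right n h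
        have h3 : (d + 1) * n = d * n + n := by ring
        linarith
    refine ⟨hcd, ?_⟩
    by_contra huv
    push_neg at huv
    have : k * (u + 1) ≤ k * v := Nat.mul_le_mul_left k huv
    have hkk : k * (u + 1) = k * u + k := by ring
    push_cast at hinv
    have hdk : (d : ℤ) < k := by exact_mod_cast hd
    linarith
  · rintro ⟨hcd, hvu⟩
    have h2 : (c + 1) * n ≤ d * n := Nat.mul_le_mul_right n hcd
    have h3 : (c + 1) * n = c * n + n := by ring
    have h4 : k * v ≤ k * u := Nat.mul_le_mul_left k hvu
    constructor
    · linarith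
    · zify [show c ≤ k * u by omega, show d ≤ k * v by omega]
      push_cast
      have hdk : (d : ℤ) ≤ k * v := by exact_mod_cast (by omega : d ≤ k * v)
      have h4' : (k : ℤ) * v ≤ k * u := by exact_mod_cast h4
      have hcd' : (c : ℤ) < d := by exact_mod_cast hcd
      linarith

theorem perfect_shuffle_inversions (k n : ℕ) (hk : 2 ≤ k) (hn : 1 ≤ n) :
    ((Finset.Icc 1 (k * n) ×ˢ Finset.Icc 1 (k * n)).filter
        (fun p : ℕ × ℕ => p.1 < p.2 ∧ k * p.2 % (k * n + 1) < k * p.1 % (k * n + 1))).card =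
      (k - 1) * k / 2 * (n * (n + 1) / 2) := by
  classical
  set A := (Finset.range k ×ˢ Finset.range k).filter
      (fun p : ℕ × ℕ => p.1 < p.2) with hA
  set B := (Finset.Icc 1 n ×ˢ Finset.Icc 1 n).filter
      (fun p : ℕ × ℕ => p.2 ≤ p.1) with hB
  have hST : ((Finset.range k ×ˢ Finset.range k) ×ˢ (Finset.Icc 1 n ×ˢ Finset.Icc 1 n)).filter
      (fun q : (ℕ × ℕ) × ℕ × ℕ => q.1.1 < q.1.2 ∧ q.2.2 ≤ q.2.1) = A ×ˢ B := by
    ext ⟨⟨c, d⟩, u, v⟩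
    simp only [hA, hB, Finset.mem_filter, Finset.mem_product]
    tauto
  have key : (A ×ˢ B).card =
      ((Finset.Icc 1 (k * n) ×ˢ Finset.Icc 1 (k * n)).filter
        (fun p : ℕ × ℕ => p.1 < p.2 ∧ k * p.2 % (k * n + 1) < k * p.1 % (k * n + 1))).card := by
    rw [← hST]
    apply Finset.card_bij (fun q _ => (q.1.1 * n + q.2.1, q.1.2 * n + q.2.2))
    · rintro ⟨⟨c, d⟩, u, v⟩ hq
      simp only [Finset.mem_filter, Finset.mem_product, Finset.mem_range, Finset.mem_Icc] at hq ⊢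
      obtain ⟨⟨⟨hc, hd⟩, ⟨hu1, hun⟩, hv1, hvn⟩, hcd, hvu⟩ := hq
      have h2 : (c + 1) * n ≤ k * n := Nat.mul_le_mul_right n hc
      have h3 : (c + 1) * n = c * n + n := by ring
      have h2' : (d + 1) * n ≤ k * n := Nat.mul_le_mul_right n hd
      have h3' : (d + 1) * n = d * n + n := by ring
      rw [psi_mod k n c u hc hu1 hun, psi_mod k n d v hd hv1 hvn]
      refine ⟨⟨⟨by omega, by linarith⟩, by omega, by linarith⟩, ?_⟩
      exact (perm_pair_iff k n c d u v hk hc hd hu1 hun hv1 hvn).mpr ⟨hcd, hvu⟩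
    · rintro ⟨⟨c, d⟩, u, v⟩ hq ⟨⟨c', d'⟩, u', v'⟩ hq' heq
      simp only [Finset.mem_filter, Finset.mem_product, Finset.mem_range, Finset.mem_Icc] at hq hq'
      obtain ⟨⟨⟨hc, hd⟩, ⟨hu1, hun⟩, hv1, hvn⟩, hcd, hvu⟩ := hq
      obtain ⟨⟨⟨hc', hd'⟩, ⟨hu1', hun'⟩, hv1', hvn'⟩, hcd', hvu'⟩ := hq'
      simp only [Prod.mk.injEq] at heq
      obtain ⟨e1, e2⟩ := heq
      obtain ⟨g1, g2⟩ := add_mul_inj hu1 hun hu1' hun' e1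
      obtain ⟨g3, g4⟩ := add_mul_inj hv1 hvn hv1' hvn' e2
      simp [g1, g2, g3, g4]
    · rintro ⟨i, j⟩ hij
      simp only [Finset.mem_filter, Finset.mem_product, Finset.mem_Icc] at hij
      obtain ⟨⟨⟨hi1, hi2⟩, hj1, hj2⟩, hlt, hinv⟩ := hij
      obtain ⟨c, u, hc, hu1, hun, hi⟩ := decomp k n i hn hi1 hi2
      obtain ⟨d, v, hd, hv1, hvn, hj⟩ := decomp k n j hn hj1 hj2
      subst hi; subst hj
      rw [psi_mod k n c u hc hu1 hun, psi_mod k n d v hd hv1 hvn] at hinv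
      obtain ⟨hcd, hvu⟩ := (perm_pair_iff k n c d u v hk hc hd hu1 hun hv1 hvn).mp ⟨hlt, hinv⟩
      refine ⟨⟨⟨c, d⟩, u, v⟩, ?_, rfl⟩
      simp only [Finset.mem_filter, Finset.mem_product, Finset.mem_range, Finset.mem_Icc]
      exact ⟨⟨⟨hc, hd⟩, ⟨hu1, hun⟩, hv1, hvn⟩, hcd, hvu⟩
  rw [← key, Finset.card_product]
  have hAcard : A.card = k * (k - 1) / 2 := by
    have hrepr : A = (Finset.range k).biUnion
        (fun d => (Finset.range d).image (fun c => (c, d))) := by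
      ext ⟨c, d⟩
      simp only [hA, Finset.mem_filter, Finset.mem_product, Finset.mem_range,
        Finset.mem_biUnion, Finset.mem_image, Prod.mk.injEq]
      constructor
      · rintro ⟨⟨h1, h2⟩, h3⟩
        exact ⟨d, h2, c, h3, rfl, rfl⟩
      · rintro ⟨e, he, a, ha, rfl, rfl⟩
        omega
    rw [hrepr, Finset.card_biUnion]
    · have : ∀ d ∈ Finset.range k,
          ((Finset.range d).image (fun c => (c, d))).card = d := by
        intro d _
        rw [Finset.card_image_of_injective _ (fun a b h => (Prod.mk.injEq ..).mp h |>.1),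
          Finset.card_range]
      rw [Finset.sum_congr rfl this, Finset.sum_range_id]
    · intro d _ d' _ hdd
      simp only [Finset.disjoint_left, Finset.mem_image, Finset.mem_range]
      rintro ⟨c, e⟩ ⟨a, _, ha⟩ ⟨b, _, hb⟩
      obtain ⟨rfl, rfl⟩ := (Prod.mk.injEq ..).mp ha
      obtain ⟨-, h2⟩ := (Prod.mk.injEq ..).mp hb
      exact hdd h2.symm
  have hBcard : B.card = n * (n + 1) / 2 := by
    have hrepr : B = (Finset.Icc 1 n).biUnion
        (fun u => (Finset.Icc 1 u).image (fun v => (u, v))) := by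
      ext ⟨u, v⟩
      simp only [hB, Finset.mem_filter, Finset.mem_product, Finset.mem_Icc,
        Finset.mem_biUnion, Finset.mem_image, Prod.mk.injEq]
      constructor
      · rintro ⟨⟨h1, h2⟩, h3⟩
        exact ⟨u, ⟨h1.1, h1.2⟩, v, ⟨h2.1, h3⟩, rfl, rfl⟩
      · rintro ⟨e, he, a, ha, rfl, rfl⟩
        omega
    rw [hrepr, Finset.card_biUnion]
    · have h1 : ∀ u ∈ Finset.Icc 1 n,
          ((Finset.Icc 1 u).image (fun v => (u, v))).card = u := by
        intro u hu
        rw [Finset.card_image_of_injective _ (fun a b h => (Prod.mk.injEq ..).mp h |>.2),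
          Nat.card_Icc]
        simp
      rw [Finset.sum_congr rfl h1]
      have h2 : Finset.range (n + 1) = insert 0 (Finset.Icc 1 n) := by
        ext x
        simp only [Finset.mem_range, Finset.mem_insert, Finset.mem_Icc]
        omega
      have h3 := Finset.sum_range_id (n + 1)
      rw [h2, Finset.sum_insert (by simp)] at h3
      have h4 : (n + 1) * (n + 1 - 1) = n * (n + 1) := by
        rw [Nat.add_sub_cancel, Nat.mul_comm]
      omega
    · intro u _ u' _ huu
      simp only [Finset.disjoint_left, Finset.mem_image, Finset.mem_Icc]
      rintro ⟨a, b⟩ ⟨c, _, hc⟩ ⟨e, _, he⟩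
      obtain ⟨rfl, rfl⟩ := (Prod.mk.injEq ..).mp hc
      obtain ⟨h2, -⟩ := (Prod.mk.injEq ..).mp he
      exact huu h2.symm
  rw [hAcard, hBcard, Nat.mul_comm k (k - 1)]
end

section
/- Let k ≥ 2 and n ≥ 1 be integers. If k ≡ 0 (mod 4) or k ≡ 1 (mod 4), then the signature of the (k,n)-perfect shuffle permutation σ_{k,n} equals 1; if k ≡ 2 (mod 4) or k ≡ 3 (mod 4), then the signature of σ_{k,n} equals −1 when n ≡ 1 or 2 (mod 4) and equals 1 when n ≡ 0 or 3 (mod 4). -/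
lemma ps_mod_formula (k n a : ℕ) (hk : 1 ≤ k) (hn : 1 ≤ n) (ha : a < k * n) :
    k * (a + 1) % (k * n + 1) = k * (a % n) + k - a / n := by
  have hjk : a / n < k := by
    rw [Nat.div_lt_iff_lt_mul (by omega)]
    omega
  have hrn : a % n < n := Nat.mod_lt _ (by omega)
  have hjr : n * (a / n) + a % n = a := Nat.div_add_mod a n
  generalize hj : a / n = j at *
  generalize hr : a % n = r at *
  have base : k * (a + 1) + j = j * (k * n + 1) + (k * r + k) := by
    rw [← hjr]; ring
  have hexp : k * (a + 1) = j * (k * n + 1) + (k * r + k - j) := by omega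
  have hsmall : k * r + k - j < k * n + 1 := by
    have h1 : k * (r + 1) ≤ k * n := Nat.mul_le_mul_left k (by omega)
    have h2 : k * (r + 1) = k * r + k := by ring
    omega
  rw [hexp, Nat.add_comm, Nat.add_mul_mod_self_right, Nat.mod_eq_of_lt hsmall]

lemma ps_key (k n j j' r r' : ℕ) (hk : 2 ≤ k) (hj : j < k) (hj' : j' < k)
    (hr : r < n) (hr' : r' < n) (hba : n * j' + r' < n * j + r) :
    (k * r + k - j - 1 ≤ k * r' + k - j' - 1) ↔ (j' < j ∧ r ≤ r') := by
  have hjj' : j' ≤ j := by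
    rcases Nat.lt_or_ge j j' with h | h
    · exfalso
      have : n * (j + 1) ≤ n * j' := Nat.mul_le_mul_left n (by omega)
      have h2 : n * (j + 1) = n * j + n := by ring
      omega
    · exact h
  rcases Nat.lt_or_ge j' j with hlt | hge
  · rcases le_or_gt r r' with hrr | hrr
    · constructor
      · intro _; exact ⟨hlt, hrr⟩
      · intro _
        have hA : k * r ≤ k * r' := Nat.mul_le_mul_left k hrr
        omega
    · constructor
      · intro hle
        exfalso
        have hA : k * (r' + 1) ≤ k * r := Nat.mul_le_mul_left k (by omega)
        have hA2 : k * (r' + 1) = k * r' + k := by ring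
        omega
      · intro h; omega
  · have hjj : j' = j := le_antisymm hjj' hge
    subst hjj
    have hrr : r' < r := by omega
    constructor
    · intro hle
      exfalso
      have hA : k * (r' + 1) ≤ k * r := Nat.mul_le_mul_left k (by omega)
      have hA2 : k * (r' + 1) = k * r' + k := by ring
      omega
    · intro h; omega

lemma ps_tri_parity (k S : ℕ) (h2 : S * 2 = k * (k - 1)) :
    (k % 4 = 0 ∨ k % 4 = 1 → S % 2 = 0) ∧ (k % 4 = 2 ∨ k % 4 = 3 → S % 2 = 1) := by
  rcases k with _ | m
  · omega
  · have hm : (m + 1) * (m + 1 - 1) = (m + 1) * m := by simp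
    rw [hm] at h2
    obtain ⟨c, t, hc, ht⟩ : ∃ c t, (c = 0 ∨ c = 1 ∨ c = 2 ∨ c = 3) ∧ m = 4 * t + c :=
      ⟨m % 4, m / 4, by omega, by omega⟩
    subst ht
    have hex : (4 * t + c + 1) * (4 * t + c) =
        16 * (t * t) + 8 * (c * t) + 4 * t + (c * c + c) := by ring
    rw [hex] at h2
    rcases hc with rfl | rfl | rfl | rfl <;>
    · generalize t * t = u at h2
      omega

lemma ps_tri_parity2 (n S : ℕ) (h2 : S * 2 = n * (n + 1)) :
    (n % 4 = 1 ∨ n % 4 = 2 → S % 2 = 1) ∧ (n % 4 = 0 ∨ n % 4 = 3 → S % 2 = 0) := by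
  obtain ⟨c, t, hc, ht⟩ : ∃ c t, (c = 0 ∨ c = 1 ∨ c = 2 ∨ c = 3) ∧ n = 4 * t + c :=
    ⟨n % 4, n / 4, by omega, by omega⟩
  subst ht
  have hex : (4 * t + c) * (4 * t + c + 1) =
      16 * (t * t) + 8 * (c * t) + 4 * t + (c * c + c) := by ring
  rw [hex] at h2
  rcases hc with rfl | rfl | rfl | rfl <;>
  · generalize t * t = u at h2
    omega

theorem perfect_shuffle_sign (k n : ℕ) (hk : 2 ≤ k) (hn : 1 ≤ n) :
    ((k % 4 = 0 ∨ k % 4 = 1) → Equiv.Perm.sign (pshuffle k n) = 1) ∧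
    ((k % 4 = 2 ∨ k % 4 = 3) →
      ((n % 4 = 1 ∨ n % 4 = 2) → Equiv.Perm.sign (pshuffle k n) = -1) ∧
      ((n % 4 = 0 ∨ n % 4 = 3) → Equiv.Perm.sign (pshuffle k n) = 1)) := by
  have hn0 : 0 < n := hn
  have hN : 2 ≤ k * n := le_trans hk (Nat.le_mul_of_pos_right k hn0)
  let e : {x : ℕ // x ∈ Finset.Icc 1 (k * n)} ≃ Fin (k * n) :=
    { toFun := fun x => ⟨x.1 - 1, by have := Finset.mem_Icc.mp x.2; omega⟩
      invFun := fun a => ⟨a.1 + 1, Finset.mem_Icc.mpr ⟨by omega, by have := a.isLt; omega⟩⟩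
      left_inv := fun x => by
        have := Finset.mem_Icc.mp x.2
        apply Subtype.ext
        simp only
        omega
      right_inv := fun a => by apply Fin.ext; simp }
  set P : Equiv.Perm (Fin (k * n)) := (e.symm.trans (pshuffle k n)).trans e with hP
  have hPsign : Equiv.Perm.sign P = Equiv.Perm.sign (pshuffle k n) :=
    Equiv.Perm.sign_symm_trans_trans _ e
  have hPval : ∀ v : Fin (k * n),
      ((P v : Fin (k * n)) : ℕ) = k * ((v : ℕ) % n) + k - (v : ℕ) / n - 1 := by
    intro v
    have h1 : ((P v : Fin (k * n)) : ℕ) = k * ((v : ℕ) + 1) % (k * n + 1) - 1 := rfl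
    rw [h1, ps_mod_formula k n (v : ℕ) (by omega) hn v.isLt]
  haveI : Nontrivial (Fin (k * n)) := Fin.nontrivial_iff_two_le.mpr hN
  have hsurj : Function.Surjective
      (MonoidHom.mk' Equiv.Perm.signAux Equiv.Perm.signAux_mul :
        Equiv.Perm (Fin (k * n)) →* ℤˣ) := by
    intro u
    rcases Int.units_eq_one_or u with rfl | rfl
    · exact ⟨1, Equiv.Perm.signAux_one _⟩
    · refine ⟨Equiv.swap ⟨0, by omega⟩ ⟨1, by omega⟩, Equiv.Perm.signAux_swap ?_⟩
      exact fun h => by simpa using congrArg Fin.val h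
  have hhom := Equiv.Perm.eq_sign_of_surjective_hom hsurj
  have hsignAux : Equiv.Perm.sign P = Equiv.Perm.signAux P := by
    rw [← hhom]; rfl
  classical
  have hprod : Equiv.Perm.signAux P =
      (-1 : ℤˣ) ^ ((Equiv.Perm.finPairsLT (k * n)).filter
        (fun x => P x.1 ≤ P x.2)).card := by
    unfold Equiv.Perm.signAux
    rw [Finset.prod_ite, Finset.prod_const, Finset.prod_const, one_pow, mul_one]
  have hchar : ∀ x ∈ Equiv.Perm.finPairsLT (k * n),
      (P x.1 ≤ P x.2 ↔
        ((x.2 : ℕ) / n < (x.1 : ℕ) / n ∧ (x.1 : ℕ) % n ≤ (x.2 : ℕ) % n)) := by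
    intro x hx
    have hba : (x.2 : ℕ) < (x.1 : ℕ) := Equiv.Perm.mem_finPairsLT.mp hx
    rw [Fin.le_def, hPval, hPval]
    have ha : (x.1 : ℕ) < k * n := x.1.isLt
    have hb : (x.2 : ℕ) < k * n := x.2.isLt
    exact ps_key k n ((x.1 : ℕ) / n) ((x.2 : ℕ) / n) ((x.1 : ℕ) % n) ((x.2 : ℕ) % n) hk
      ((Nat.div_lt_iff_lt_mul hn0).mpr ha) ((Nat.div_lt_iff_lt_mul hn0).mpr hb)
      (Nat.mod_lt _ hn0) (Nat.mod_lt _ hn0)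
      (by rw [Nat.div_add_mod, Nat.div_add_mod]; exact hba)
  have hcard : ((Equiv.Perm.finPairsLT (k * n)).filter
        (fun x => P x.1 ≤ P x.2)).card =
      (((Finset.range k).sigma fun j => Finset.range j) ×ˢ
        ((Finset.range n).sigma fun r => Finset.Icc r (n - 1))).card := by
    apply Finset.card_bij (fun x _ =>
      ((⟨(x.1 : ℕ) / n, (x.2 : ℕ) / n⟩ : Σ _ : ℕ, ℕ),
       (⟨(x.1 : ℕ) % n, (x.2 : ℕ) % n⟩ : Σ _ : ℕ, ℕ)))
    · intro x hx
      rw [Finset.mem_filter] at hx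
      obtain ⟨hx1, hx2⟩ := hx
      have hc := (hchar x hx1).mp hx2
      rw [Finset.mem_product, Finset.mem_sigma, Finset.mem_sigma,
        Finset.mem_range, Finset.mem_range, Finset.mem_range, Finset.mem_Icc]
      refine ⟨⟨(Nat.div_lt_iff_lt_mul hn0).mpr x.1.isLt, hc.1⟩,
        Nat.mod_lt _ hn0, hc.2, ?_⟩
      show (x.2 : ℕ) % n ≤ n - 1
      have := Nat.mod_lt (x.2 : ℕ) hn0
      omega
    · intro x hx y hy hxy
      simp only [Prod.mk.injEq, Sigma.mk.inj_iff, heq_eq_eq] at hxy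
      obtain ⟨⟨h1, h2⟩, h3, h4⟩ := hxy
      have e1 : (x.1 : ℕ) = (y.1 : ℕ) := by
        rw [← Nat.div_add_mod (x.1 : ℕ) n, ← Nat.div_add_mod (y.1 : ℕ) n, h1, h3]
      have e2 : (x.2 : ℕ) = (y.2 : ℕ) := by
        rw [← Nat.div_add_mod (x.2 : ℕ) n, ← Nat.div_add_mod (y.2 : ℕ) n, h2, h4]
      exact Sigma.ext (Fin.ext e1) (heq_of_eq (Fin.ext e2))
    · intro y hy
      rw [Finset.mem_product, Finset.mem_sigma, Finset.mem_sigma,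
        Finset.mem_range, Finset.mem_range, Finset.mem_range, Finset.mem_Icc] at hy
      obtain ⟨⟨hj, hj'⟩, hr, hrr', hr'⟩ := hy
      have hmul : n * (y.1.1 + 1) ≤ n * k := Nat.mul_le_mul_left n (by omega)
      have hmul2 : n * (y.1.1 + 1) = n * y.1.1 + n := by ring
      have hmulc : n * k = k * n := Nat.mul_comm n k
      have hmulb : n * (y.1.2 + 1) ≤ n * y.1.1 := Nat.mul_le_mul_left n (by omega)
      have hmulb2 : n * (y.1.2 + 1) = n * y.1.2 + n := by ring
      have ha : n * y.1.1 + y.2.1 < k * n := by omega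
      have hb : n * y.1.2 + y.2.2 < k * n := by omega
      have hblta : n * y.1.2 + y.2.2 < n * y.1.1 + y.2.1 := by omega
      refine ⟨⟨⟨n * y.1.1 + y.2.1, ha⟩, ⟨n * y.1.2 + y.2.2, hb⟩⟩, ?_, ?_⟩
      · rw [Finset.mem_filter]
        have hmem : (⟨⟨n * y.1.1 + y.2.1, ha⟩, ⟨n * y.1.2 + y.2.2, hb⟩⟩ :
            Σ _ : Fin (k * n), Fin (k * n)) ∈ Equiv.Perm.finPairsLT (k * n) :=
          Equiv.Perm.mem_finPairsLT.mpr hblta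
        refine ⟨hmem, (hchar _ hmem).mpr ?_⟩
        simp only
        rw [Nat.mul_add_div hn0, Nat.mul_add_div hn0, Nat.mul_add_mod, Nat.mul_add_mod,
          Nat.div_eq_of_lt hr, Nat.div_eq_of_lt (by omega), Nat.mod_eq_of_lt hr,
          Nat.mod_eq_of_lt (by omega)]
        omega
      · simp only
        rw [Nat.mul_add_div hn0, Nat.mul_add_div hn0, Nat.mul_add_mod, Nat.mul_add_mod,
          Nat.div_eq_of_lt hr, Nat.div_eq_of_lt (by omega), Nat.mod_eq_of_lt hr,
          Nat.mod_eq_of_lt (by omega)]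
        simp only [Nat.add_zero]
  have hcardT : (((Finset.range k).sigma fun j => Finset.range j) ×ˢ
        ((Finset.range n).sigma fun r => Finset.Icc r (n - 1))).card =
      (∑ j ∈ Finset.range k, j) * (∑ r ∈ Finset.range n, (n - r)) := by
    rw [Finset.card_product, Finset.card_sigma, Finset.card_sigma]
    congr 1
    · exact Finset.sum_congr rfl fun j _ => Finset.card_range j
    · refine Finset.sum_congr rfl fun r hr => ?_
      rw [Nat.card_Icc]
      omega
  have hSa : (∑ j ∈ Finset.range k, j) * 2 = k * (k - 1) := Finset.sum_range_id_mul_two k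
  have hSb : (∑ r ∈ Finset.range n, (n - r)) * 2 = n * (n + 1) := by
    have hrefl := Finset.sum_range_reflect (fun r => n - r) n
    have hstep : ∑ j ∈ Finset.range n, (n - (n - 1 - j)) = ∑ j ∈ Finset.range n, (j + 1) :=
      Finset.sum_congr rfl fun j hj => by
        have := Finset.mem_range.mp hj; omega
    have hsum1 : ∑ j ∈ Finset.range n, (j + 1) = (∑ j ∈ Finset.range n, j) + n := by
      rw [Finset.sum_add_distrib, Finset.sum_const, Finset.card_range, smul_eq_mul, mul_one]
    have h2 : (∑ j ∈ Finset.range n, j) * 2 = n * (n - 1) := Finset.sum_range_id_mul_two n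
    obtain ⟨m, rfl⟩ : ∃ m, n = m + 1 := ⟨n - 1, by omega⟩
    have hq : (m + 1) * (m + 1 - 1) = (m + 1) * m := by simp
    have hq2 : (m + 1) * m + 2 * (m + 1) = (m + 1) * (m + 1 + 1) := by ring
    omega
  have hpar1 := ps_tri_parity k _ hSa
  have hpar2 := ps_tri_parity2 n _ hSb
  have hsign : Equiv.Perm.sign (pshuffle k n) =
      (-1 : ℤˣ) ^ ((∑ j ∈ Finset.range k, j) * (∑ r ∈ Finset.range n, (n - r))) := by
    rw [← hPsign, hsignAux, hprod, hcard, hcardT]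
  refine ⟨fun hcase => ?_, fun hcase => ⟨fun hncase => ?_, fun hncase => ?_⟩⟩
  · rw [hsign]
    exact Even.neg_one_pow ((Nat.even_iff.mpr (hpar1.1 hcase)).mul_right _)
  · rw [hsign]
    exact Odd.neg_one_pow
      ((Nat.odd_iff.mpr (hpar1.2 hcase)).mul (Nat.odd_iff.mpr (hpar2.1 hncase)))
  · rw [hsign]
    exact Even.neg_one_pow ((Nat.even_iff.mpr (hpar2.2 hncase)).mul_left _)
end

section
/- Let k ≥ 2 and n ≥ 1 be integers. Then the following are equivalent: (1) the (k,n)-perfect shuffle permutation σ_{k,n} is a single cycle of length kn (equivalently C_k(n) = 1); (2) kn+1 is a prime number and k is a primitive root modulo kn+1; (3) the multiplicative order of k modulo kn+1 equals kn. -/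
section Aux

lemma pshuffle_apply_val (k n : ℕ) (x : {x : ℕ // x ∈ Finset.Icc 1 (k * n)}) :
    ((pshuffle k n) x).1 = k * x.1 % (k * n + 1) := rfl

lemma pshuffle_pow_cast (k n : ℕ) (i : ℕ) (x : {x : ℕ // x ∈ Finset.Icc 1 (k * n)}) :
    ((((pshuffle k n) ^ i) x).1 : ZMod (k * n + 1)) =
      (k : ZMod (k * n + 1)) ^ i * (x.1 : ZMod (k * n + 1)) := by
  induction i with
  | zero => simp
  | succ i ih =>
    rw [pow_succ', Equiv.Perm.mul_apply]
    have h1 : ∀ y : {x : ℕ // x ∈ Finset.Icc 1 (k * n)},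
        (((pshuffle k n) y).1 : ZMod (k * n + 1)) =
        (k : ZMod (k*n+1)) * (y.1 : ZMod (k*n+1)) := fun y => by
      rw [pshuffle_apply_val, ZMod.natCast_mod, Nat.cast_mul]
    rw [h1, ih]; ring

end Aux

theorem perfect_shuffle_single_cycle_iff (k n : ℕ) (hk : 2 ≤ k) (hn : 1 ≤ n) :
    (cycleCount (pshuffle k n) = 1 ↔
      Nat.Prime (k * n + 1) ∧ orderOf (k : ZMod (k * n + 1)) = Nat.totient (k * n + 1)) ∧
    (cycleCount (pshuffle k n) = 1 ↔ orderOf (k : ZMod (k * n + 1)) = k * n) := by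
  have hkn2 : 2 ≤ k * n := le_trans hk (Nat.le_mul_of_pos_right k hn)
  haveI : Fact (1 < k * n + 1) := ⟨by omega⟩
  have hco : Nat.Coprime k (k * n + 1) :=
    ((Nat.coprime_mul_left_add_left 1 k n).mpr (Nat.coprime_one_left k)).symm
  set d := orderOf (k : ZMod (k * n + 1)) with hd
  set u : (ZMod (k*n+1))ˣ := ZMod.unitOfCoprime k hco with hu
  have hcu : ((u : (ZMod (k*n+1))ˣ) : ZMod (k*n+1)) = (k : ZMod (k*n+1)) :=
    ZMod.coe_unitOfCoprime k hco
  have hdu : d = orderOf u := by rw [hd, ← hcu, orderOf_units]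
  have hdpos : 0 < d := by rw [hdu]; exact orderOf_pos u
  have hdvd : d ∣ Nat.totient (k*n+1) := by
    rw [hdu, ← ZMod.card_units_eq_totient]
    exact orderOf_dvd_card
  have htotpos : 0 < Nat.totient (k*n+1) := Nat.totient_pos.mpr (by omega)
  have htotle : Nat.totient (k*n+1) ≤ k*n := by
    have := Nat.totient_lt (k*n+1) (by omega); omega
  have hdle : d ≤ k*n := le_trans (Nat.le_of_dvd htotpos hdvd) htotle
  have hvalN : ∀ a ∈ Finset.Icc 1 (k*n), ((a : ZMod (k*n+1))).val = a := by
    intro a ha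
    have := Finset.mem_Icc.mp ha
    exact ZMod.val_natCast_of_lt (by omega)
  have hinjN : ∀ a ∈ Finset.Icc 1 (k*n), ∀ b ∈ Finset.Icc 1 (k*n),
      (a : ZMod (k*n+1)) = (b : ZMod (k*n+1)) → a = b := by
    intro a ha b hb h
    rw [← hvalN a ha, ← hvalN b hb, h]
  have hne0 : ∀ a ∈ Finset.Icc 1 (k*n), (a : ZMod (k*n+1)) ≠ 0 := by
    intro a ha h0
    have h1 := hvalN a ha
    rw [h0, ZMod.val_zero] at h1
    have := Finset.mem_Icc.mp ha
    omega
  have hpowinj : ∀ i < d, ∀ j < d,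
      (k : ZMod (k*n+1)) ^ i = (k : ZMod (k*n+1)) ^ j → i = j := by
    intro i hi j hj h
    rw [← hcu] at h
    have h' : u ^ i = u ^ j := Units.ext (by push_cast; exact h)
    exact pow_injOn_Iio_orderOf (by rwa [Set.mem_Iio, ← hdu]) (by rwa [Set.mem_Iio, ← hdu]) h'
  have hpowne0 : ∀ i : ℕ, (k : ZMod (k*n+1)) ^ i ≠ 0 := by
    intro i
    rw [← hcu, ← Units.val_pow_eq_pow_val]
    exact Units.ne_zero _
  set x0 : {x : ℕ // x ∈ Finset.Icc 1 (k*n)} :=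
    ⟨1, Finset.mem_Icc.mpr ⟨le_refl 1, by omega⟩⟩ with hx0
  have key : cycleCount (pshuffle k n) = 1 ↔ d = k * n := by
    constructor
    · intro h1
      have hsub : Subsingleton (Quotient (sameCycleSetoid (pshuffle k n))) :=
        (Nat.card_eq_one_iff_unique.mp h1).1
      have hsc : ∀ x, (pshuffle k n).SameCycle x0 x := fun x =>
        Quotient.exact (Subsingleton.elim
          (Quotient.mk (sameCycleSetoid _) x0) (Quotient.mk _ x))
      refine le_antisymm hdle ?_
      have hsubset : (Finset.Icc 1 (k*n)).image (fun a : ℕ => (a : ZMod (k*n+1))) ⊆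
          (Finset.range d).image (fun i => (k : ZMod (k*n+1))^i) := by
        intro a ha
        obtain ⟨b, hb, rfl⟩ := Finset.mem_image.mp ha
        obtain ⟨i, _, hpow⟩ := (hsc ⟨b, hb⟩).exists_pow_eq'
        have hbk : (k : ZMod (k*n+1))^i = (b : ZMod (k*n+1)) := by
          have h2 := pshuffle_pow_cast k n i x0
          rw [hpow] at h2
          simpa [hx0] using h2.symm
        refine Finset.mem_image.mpr ⟨i % d, Finset.mem_range.mpr (Nat.mod_lt _ hdpos), ?_⟩
        rw [← hbk]
        have h3 : u ^ (i % orderOf u) = u ^ i := pow_mod_orderOf u i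
        have h4 : ((u : ZMod (k*n+1))) ^ (i % orderOf u) = ((u : ZMod (k*n+1))) ^ i := by
          rw [← Units.val_pow_eq_pow_val, ← Units.val_pow_eq_pow_val, h3]
        rwa [hcu, ← hdu] at h4
      have hcard1 : ((Finset.Icc 1 (k*n)).image (fun a : ℕ => (a : ZMod (k*n+1)))).card
          = k * n := by
        rw [Finset.card_image_of_injOn (fun a ha b hb h => hinjN a ha b hb h)]
        simp
      calc k * n = _ := hcard1.symm
        _ ≤ ((Finset.range d).image (fun i => (k : ZMod (k*n+1))^i)).card :=
            Finset.card_le_card hsubset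
        _ ≤ d := le_trans Finset.card_image_le (by simp)
    · intro hdeq
      have hT : ((Finset.range (k*n)).image (fun i => (k : ZMod (k*n+1))^i)).card = k*n := by
        rw [Finset.card_image_of_injOn]
        · simp
        · intro i hi j hj h
          exact hpowinj i (by simpa [hdeq] using hi) j (by simpa [hdeq] using hj) h
      have hTsub : (Finset.range (k*n)).image (fun i => (k : ZMod (k*n+1))^i) ⊆
          Finset.univ.erase (0 : ZMod (k*n+1)) := by
        intro a ha
        obtain ⟨i, _, rfl⟩ := Finset.mem_image.mp ha
        exact Finset.mem_erase.mpr ⟨hpowne0 i, Finset.mem_univ _⟩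
      have hEcard : (Finset.univ.erase (0 : ZMod (k*n+1))).card = k * n := by
        rw [Finset.card_erase_of_mem (Finset.mem_univ _), Finset.card_univ, ZMod.card]
        simp
      have hTeq : (Finset.range (k*n)).image (fun i => (k : ZMod (k*n+1))^i) =
          Finset.univ.erase (0 : ZMod (k*n+1)) :=
        Finset.eq_of_subset_of_card_le hTsub (by rw [hT, hEcard])
      have hsc : ∀ x : {x : ℕ // x ∈ Finset.Icc 1 (k*n)}, (pshuffle k n).SameCycle x0 x := by
        intro x
        have hxE : (x.1 : ZMod (k*n+1)) ∈ Finset.univ.erase (0 : ZMod (k*n+1)) :=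
          Finset.mem_erase.mpr ⟨hne0 x.1 x.2, Finset.mem_univ _⟩
        rw [← hTeq] at hxE
        obtain ⟨i, _, hik⟩ := Finset.mem_image.mp hxE
        refine ⟨(i : ℤ), ?_⟩
        rw [zpow_natCast]
        apply Subtype.ext
        apply hinjN _ (((pshuffle k n) ^ i) x0).2 _ x.2
        rw [pshuffle_pow_cast k n i x0, ← hik]
        simp [hx0]
      haveI : Subsingleton (Quotient (sameCycleSetoid (pshuffle k n))) := by
        constructor
        intro a b
        refine Quotient.inductionOn₂ a b (fun x y => Quotient.sound ?_)
        exact ((hsc x).symm.trans (hsc y))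
      exact Nat.card_eq_one_iff_unique.mpr ⟨this, ⟨Quotient.mk _ x0⟩⟩
  refine ⟨?_, key⟩
  constructor
  · intro h
    have hD := key.mp h
    have hdt := Nat.le_of_dvd htotpos hdvd
    have htot : Nat.totient (k*n+1) = k*n := by omega
    exact ⟨(Nat.totient_eq_iff_prime (by omega)).mp (by rw [htot]; omega), by omega⟩
  · rintro ⟨hp, hord⟩
    apply key.mpr
    rw [hord, Nat.totient_prime hp]
    omega
end

section
/- Let n ≥ 2 be an integer such that 2n+1 is prime and the multiplicative order of 2 modulo 2n+1 equals 2n. Then n ≡ 1 (mod 4) or n ≡ 2 (mod 4); moreover, if n ≡ 1 (mod 4) then the multiplicative order of −2 modulo 2n+1 is strictly less than 2n, while if n ≡ 2 (mod 4) then the multiplicative order of −2 modulo 2n+1 equals 2n. -/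
theorem orderOf_neg_two_cases (n : ℕ) (hn : 2 ≤ n) (hp : Nat.Prime (2 * n + 1))
    (h : orderOf (2 : ZMod (2 * n + 1)) = 2 * n) :
    (n % 4 = 1 ∨ n % 4 = 2) ∧
    (n % 4 = 1 → orderOf (-2 : ZMod (2 * n + 1)) < 2 * n) ∧
    (n % 4 = 2 → orderOf (-2 : ZMod (2 * n + 1)) = 2 * n) := by
  haveI : Fact (Nat.Prime (2 * n + 1)) := ⟨hp⟩
  have hpow := pow_orderOf_eq_one (2 : ZMod (2 * n + 1))
  rw [h] at hpow
  have hsq : ((2 : ZMod (2 * n + 1)) ^ n) * ((2 : ZMod (2 * n + 1)) ^ n) = 1 := by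
    rw [← pow_add, show n + n = 2 * n by ring]; exact hpow
  have hne1 : (2 : ZMod (2 * n + 1)) ^ n ≠ 1 := by
    intro h1
    have hd := orderOf_dvd_of_pow_eq_one h1
    rw [h] at hd
    have := Nat.le_of_dvd (by omega) hd
    omega
  have hneg : (2 : ZMod (2 * n + 1)) ^ n = -1 := by
    rcases mul_self_eq_one_iff.mp hsq with h1 | h1
    · exact absurd h1 hne1
    · exact h1
  have h20 : (2 : ZMod (2 * n + 1)) ≠ 0 := by
    intro h0
    have := hneg
    rw [h0, zero_pow (show n ≠ 0 by omega)] at this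
    exact one_ne_zero (neg_eq_zero.mp this.symm)
  have hmod : n % 4 = 1 ∨ n % 4 = 2 := by
    by_contra hc
    push_neg at hc
    have hsq2 : IsSquare (2 : ZMod (2 * n + 1)) := by
      rw [ZMod.exists_sq_eq_two_iff (by omega)]
      omega
    obtain ⟨x, hx⟩ := hsq2
    have hxne : x ≠ 0 := by
      intro h0
      rw [h0, mul_zero] at hx
      exact h20 hx
    apply hne1
    have hx1 : x ^ (2 * n + 1 - 1) = 1 := ZMod.pow_card_sub_one_eq_one hxne
    calc (2 : ZMod (2 * n + 1)) ^ n = (x * x) ^ n := by rw [hx]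
      _ = x ^ (2 * n + 1 - 1) := by rw [← pow_two, ← pow_mul, show 2 * n + 1 - 1 = 2 * n by omega]
      _ = 1 := hx1
  have hneg2 : (-2 : ZMod (2 * n + 1)) = 2 ^ (n + 1) := by
    rw [pow_succ, hneg]; ring
  have hord : orderOf (-2 : ZMod (2 * n + 1)) = 2 * n / Nat.gcd (2 * n) (n + 1) := by
    rw [hneg2, orderOf_pow' _ (by omega : n + 1 ≠ 0), h]
  refine ⟨hmod, ?_, ?_⟩
  · intro h1
    rw [hord]
    have h2 : 2 ∣ Nat.gcd (2 * n) (n + 1) := Nat.dvd_gcd ⟨n, rfl⟩ ⟨(n + 1) / 2, by omega⟩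
    calc 2 * n / Nat.gcd (2 * n) (n + 1) ≤ 2 * n / 2 :=
          Nat.div_le_div_left (Nat.le_of_dvd (Nat.gcd_pos_of_pos_left _ (by omega)) h2)
            (by omega)
      _ < 2 * n := by omega
  · intro h2
    rw [hord]
    have hcop : Nat.Coprime (2 * n) (n + 1) := by
      apply Nat.Coprime.mul
      · refine Nat.coprime_two_left.mpr ?_
        rcases Nat.even_or_odd (n + 1) with he | ho
        · exfalso; obtain ⟨k, hk⟩ := he; omega
        · exact ho
      · simp
    rw [hcop]
    omega
end

section
/- Let k ≥ 2 and n ≥ 1 be integers, and let f_{k,n} be the linear endomorphism of ℝ^{kn} defined on the canonical basis (e_1, …, e_{kn}) by f_{k,n}(e_j) = e_{σ_{k,n}(j)} for every j ∈ {1, …, kn}. Then the characteristic polynomial of f_{k,n} equals the product, over all divisors d of kn+1 with d ≠ 1, of (X^{ord_k(d)} − 1)^{φ(d)/ord_k(d)}. -/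
open Polynomial Matrix in
lemma cycle_charpoly (t : ℕ) [NeZero t] :
    (Matrix.of fun i j : ZMod t => if i = j + 1 then (1:ℝ) else 0).charpoly
      = X ^ t - 1 := by
  have ht : 0 < t := Nat.pos_of_ne_zero (NeZero.ne t)
  rcases eq_or_lt_of_le (Nat.one_le_iff_ne_zero.mpr (NeZero.ne t)) with h1 | h2
  · -- t = 1
    subst h1
    haveI : Unique (ZMod 1) := by infer_instance
    rw [Matrix.charpoly, Matrix.det_unique]
    have hd : (default : ZMod 1) = default + 1 := Subsingleton.elim _ _
    rw [charmatrix_apply_eq, pow_one]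
    rw [Matrix.of_apply]
    simp [eq_iff_true_of_subsingleton]
  · -- t ≥ 2
    haveI : Fact (1 < t) := ⟨h2⟩
    have hone : (1 : ZMod t) ≠ 0 := one_ne_zero
    set A : Matrix (ZMod t) (ZMod t) ℝ :=
      Matrix.of fun i j : ZMod t => if i = j + 1 then (1:ℝ) else 0 with hA
    set c : Equiv.Perm (ZMod t) := Equiv.addLeft 1 with hc
    have hcapp : ∀ j : ZMod t, c j = j + 1 := fun j => add_comm 1 j
    have hentry : ∀ i j : ZMod t, (charmatrix A) i j =
        (if i = j then X else 0) - (if i = j + 1 then 1 else 0) := by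
      intro i j
      by_cases h : i = j
      · subst h
        rw [charmatrix_apply_eq, if_pos rfl, hA]
        by_cases h2 : i = i + 1
        · exact absurd (by linear_combination h2 : (0:ZMod t) = 1) (Ne.symm hone)
        · simp [h2]
      · rw [charmatrix_apply_ne _ _ _ h, if_neg h, hA]
        by_cases h2 : i = j + 1 <;> simp [h2]
    have hmain : ∀ τ : Equiv.Perm (ZMod t), τ ≠ 1 → τ ≠ c →
        ∏ i, (charmatrix A) (τ i) i = 0 := by
      intro τ hτ1 hτc
      by_cases hstep : ∀ j, τ j = j ∨ τ j = j + 1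
      · exfalso
        by_cases hfix : ∀ j, τ j = j
        · exact hτ1 (Equiv.ext hfix)
        · push_neg at hfix
          obtain ⟨j0, hj0⟩ := hfix
          have hj0' : τ j0 = j0 + 1 := (hstep j0).resolve_left hj0
          have hall : ∀ a : ℕ, τ (j0 + a) = j0 + a + 1 := by
            intro a
            induction a with
            | zero => simpa using hj0'
            | succ b ih =>
              have hcast : ((b+1 : ℕ) : ZMod t) = (b : ZMod t) + 1 := by push_cast; ring
              rw [hcast]
              rcases hstep (j0 + ((b:ZMod t)+1)) with h | h
              · exfalso
                have : τ (j0 + ((b:ZMod t)+1)) = τ (j0 + b) := by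
                  rw [ih, h]; ring
                have := τ.injective this
                have h10 : (1 : ZMod t) = 0 := by linear_combination this
                exact hone h10
              · rw [h]
          apply hτc
          ext x
          have hx : x = j0 + ((x - j0).val : ℕ) := by
            rw [ZMod.natCast_val, ZMod.cast_id]; ring
          rw [hx, hall, hcapp]
      · push_neg at hstep
        obtain ⟨j, hj1, hj2⟩ := hstep
        apply Finset.prod_eq_zero (Finset.mem_univ j)
        rw [hentry, if_neg hj1, if_neg hj2, sub_zero]
    have hc1 : c ≠ 1 := by
      intro h
      have h0 : c 0 = 0 := by rw [h]; rfl
      rw [hcapp, zero_add] at h0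
      exact hone h0
    -- c is a cycle with full support
    have hcycle : c.IsCycle := by
      refine ⟨0, by rw [hcapp, zero_add]; exact hone, fun y hy => ?_⟩
      refine ⟨(y.val : ℤ), ?_⟩
      have hpow : ∀ a : ℕ, (c ^ a) 0 = (a : ZMod t) := by
        intro a
        induction a with
        | zero => simp
        | succ b ih => rw [pow_succ', Equiv.Perm.mul_apply, ih, hcapp]; push_cast; ring
      rw [zpow_natCast, hpow, ZMod.natCast_val, ZMod.cast_id]
    have hsupp : c.support = Finset.univ := by
      ext j
      simp only [Finset.mem_univ, iff_true, Equiv.Perm.mem_support, hcapp]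
      intro h
      exact hone (by linear_combination h)
    have hsign : Equiv.Perm.sign c = (-1 : ℤˣ) ^ (t + 1) := by
      rw [hcycle.sign, hsupp, Finset.card_univ, ZMod.card]
      rw [pow_succ, mul_neg_one]
    -- compute det
    rw [Matrix.charpoly, Matrix.det_apply]
    rw [← Finset.sum_subset (Finset.subset_univ ({1, c} : Finset (Equiv.Perm (ZMod t))))
      (fun τ _ hτ => ?_)]
    · rw [Finset.sum_pair hc1.symm]
      have hprod1 : ∏ i, (charmatrix A) ((1 : Equiv.Perm (ZMod t)) i) i = X ^ t := by
        have : ∀ i : ZMod t, (charmatrix A) ((1 : Equiv.Perm (ZMod t)) i) i = X := by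
          intro i
          rw [Equiv.Perm.one_apply, hentry, if_pos rfl]
          have h3 : i ≠ i + 1 := fun h2 => hone (by linear_combination -h2)
          rw [if_neg h3, sub_zero]
        rw [Finset.prod_congr rfl (fun i _ => this i), Finset.prod_const,
          Finset.card_univ, ZMod.card]
      have hprodc : ∏ i, (charmatrix A) (c i) i = (-1 : ℝ[X]) ^ t := by
        have : ∀ i : ZMod t, (charmatrix A) (c i) i = -1 := by
          intro i
          rw [hcapp, hentry]
          have h3 : i + 1 ≠ i := fun h2 => hone (by linear_combination h2)
          rw [if_neg h3, if_pos rfl, zero_sub]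
        rw [Finset.prod_congr rfl (fun i _ => this i), Finset.prod_const,
          Finset.card_univ, ZMod.card]
      rw [hprod1, hprodc, Equiv.Perm.sign_one, one_smul, hsign]
      rcases Nat.even_or_odd t with he | ho
      · rw [he.neg_one_pow, (he.add_one).neg_one_pow]
        simp only [Units.neg_smul, one_smul]
        ring
      · rw [ho.neg_one_pow, (ho.add_one).neg_one_pow]
        simp only [Units.neg_smul, one_smul]
        ring
    · rw [hmain τ ?h1 ?h2, smul_zero]
      · intro h; exact hτ (by rw [h]; simp)
      · intro h; exact hτ (by rw [h]; simp)

open Polynomial Matrix in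
lemma transitive_charpoly {β : Type*} [Fintype β] [DecidableEq β] [Nonempty β]
    (τ : Equiv.Perm β) (h : ∀ x y : β, ∃ i : ℕ, (τ ^ i) x = y) :
    (Matrix.of fun i j : β => if i = τ j then (1:ℝ) else 0).charpoly
      = X ^ (Fintype.card β) - 1 := by
  classical
  obtain ⟨x0⟩ := ‹Nonempty β›
  set t := Function.minimalPeriod τ x0 with htdef
  have hper : x0 ∈ Function.periodicPts τ := by
    refine Function.mem_periodicPts.mpr ⟨orderOf τ, orderOf_pos τ, ?_⟩
    show (τ : β → β)^[orderOf τ] x0 = x0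
    rw [← Equiv.Perm.coe_pow, pow_orderOf_eq_one]
    rfl
  have htpos : 0 < t := Function.minimalPeriod_pos_of_mem_periodicPts hper
  haveI : NeZero t := ⟨htpos.ne'⟩
  -- the parametrization
  have hiter : ∀ i : ℕ, (τ ^ i) x0 = (τ : β → β)^[i] x0 := fun i => by
    rw [Equiv.Perm.coe_pow]
  set e : ZMod t → β := fun j => (τ ^ (j.val)) x0 with hedef
  have hmod : ∀ i : ℕ, (τ ^ (i % t)) x0 = (τ ^ i) x0 := by
    intro i
    rw [hiter, hiter, htdef]
    exact Function.iterate_mod_minimalPeriod_eq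
  have hinj : Function.Injective e := by
    intro a b hab
    have key : (τ : β → β)^[a.val] x0 = (τ : β → β)^[b.val] x0 := by
      rw [← hiter, ← hiter]; exact hab
    have := Function.iterate_injOn_Iio_minimalPeriod (f := (τ : β → β)) (x := x0)
      (Set.mem_Iio.mpr (ZMod.val_lt a)) (Set.mem_Iio.mpr (ZMod.val_lt b)) key
    exact ZMod.val_injective t this
  have hsurj : Function.Surjective e := by
    intro y
    obtain ⟨i, hi⟩ := h x0 y
    refine ⟨(i : ZMod t), ?_⟩
    rw [hedef]
    simp only [ZMod.val_natCast]
    rw [hmod]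
    exact hi
  have hbij : Function.Bijective e := ⟨hinj, hsurj⟩
  set E : ZMod t ≃ β := Equiv.ofBijective e hbij with hEdef
  have hcard : Fintype.card β = t := by
    rw [← Fintype.card_congr E, ZMod.card]
  have hstep : ∀ b : ZMod t, τ (e b) = e (b + 1) := by
    intro b
    have h1 : (b + 1).val = (b.val + 1) % t := by
      have : ((b.val + 1 : ℕ) : ZMod t) = b + 1 := by push_cast [ZMod.natCast_val, ZMod.cast_id]; ring
      rw [← this, ZMod.val_natCast]
    rw [hedef]
    show τ ((τ ^ b.val) x0) = (τ ^ (b+1).val) x0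
    rw [h1, hmod, pow_succ', Equiv.Perm.mul_apply]
  have hmatrix : Matrix.of (fun i j : β => if i = τ j then (1:ℝ) else 0)
      = Matrix.reindex E E (Matrix.of fun i j : ZMod t => if i = j + 1 then (1:ℝ) else 0) := by
    ext i j
    rw [Matrix.reindex_apply, Matrix.submatrix_apply, Matrix.of_apply, Matrix.of_apply]
    congr 1
    have h2 : τ j = e (E.symm j + 1) := by
      rw [← hstep]
      congr 1
      exact (E.apply_symm_apply j).symm
    rw [h2]
    exact propext ((Equiv.symm_apply_eq E).symm)
  rw [hmatrix, Matrix.charpoly_reindex, cycle_charpoly, hcard]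

open Polynomial Matrix in
lemma perm_charpoly {α : Type*} [Fintype α] [DecidableEq α] (σ : Equiv.Perm α) (b : α → ℕ)
    (hb : ∀ x, b (σ x) = b x)
    (horb : ∀ x y, b x = b y → ∃ i : ℕ, (σ ^ i) x = y) :
    (Matrix.of fun i j : α => if i = σ j then (1:ℝ) else 0).charpoly
      = ∏ a ∈ Finset.univ.image b, (X ^ (Fintype.card {x // b x = a}) - 1) := by
  classical
  set M : Matrix α α ℝ := Matrix.of fun i j : α => if i = σ j then (1:ℝ) else 0 with hM
  have hBT : M.BlockTriangular b := by
    intro i j hij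
    rw [hM, Matrix.of_apply, if_neg]
    intro h
    rw [h, hb] at hij
    exact lt_irrefl _ hij
  rw [Matrix.charpoly, hBT.charmatrix.det]
  apply Finset.prod_congr rfl
  intro a ha
  obtain ⟨x, _, hx⟩ := Finset.mem_image.mp ha
  haveI : Nonempty {x // b x = a} := ⟨⟨x, hx⟩⟩
  have hiff : ∀ y, b (σ y) = a ↔ b y = a := fun y => by rw [hb]
  set τ : Equiv.Perm {x // b x = a} := σ.subtypePerm hiff with hτ
  have hblock : M.toSquareBlock b a = Matrix.of fun i j => if i = τ j then (1:ℝ) else 0 := by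
    ext i j
    rw [Matrix.toSquareBlock_def]
    show (if i.1 = σ j.1 then (1:ℝ) else 0) = _
    rw [Matrix.of_apply]
    congr 1
    rw [Subtype.ext_iff]
    rfl
  have htrans : ∀ x y : {x // b x = a}, ∃ i : ℕ, (τ ^ i) x = y := by
    intro x y
    obtain ⟨i, hi⟩ := horb x.1 y.1 (x.2.trans y.2.symm)
    exact ⟨i, by rw [hτ, Equiv.Perm.subtypePerm_pow]; exact Subtype.ext hi⟩
  rw [← charmatrix_toSquareBlock, ← Matrix.charpoly, hblock, transitive_charpoly τ htrans]

abbrev PS (k n : ℕ) := {x : ℕ // x ∈ Finset.Icc 1 (k * n)}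

open Polynomial Matrix in
theorem perfect_shuffle_charpoly (k n : ℕ) (hk : 2 ≤ k) (hn : 1 ≤ n)
    (f : ({x : ℕ // x ∈ Finset.Icc 1 (k * n)} → ℝ) →ₗ[ℝ]
      ({x : ℕ // x ∈ Finset.Icc 1 (k * n)} → ℝ))
    (hf : ∀ j, f (Pi.single j 1) = Pi.single (pshuffle k n j) 1) :
    LinearMap.charpoly f =
      ∏ d ∈ (k * n + 1).divisors.filter (· ≠ 1),
        (Polynomial.X ^ orderOf (k : ZMod d) - 1) ^
          (Nat.totient d / orderOf (k : ZMod d)) := by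
  classical
  set m := k * n + 1 with hm
  have hm2 : 2 < m := by nlinarith
  set σ : Equiv.Perm (PS k n) := pshuffle k n with hσ
  have hco : Nat.Coprime m k :=
    (Nat.coprime_mul_left_add_left 1 k n).mpr (Nat.coprime_one_left k)
  have hmem : ∀ x : (PS k n), 1 ≤ x.1 ∧ x.1 < m := by
    intro x
    have := Finset.mem_Icc.mp x.2
    omega
  have hσval : ∀ x : (PS k n), (σ x).1 = k * x.1 % m := fun x => rfl
  have hpow : ∀ (i : ℕ) (x : (PS k n)), ((σ ^ i) x).1 = k ^ i * x.1 % m := by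
    intro i
    induction i with
    | zero =>
      intro x
      simp only [pow_zero, Equiv.Perm.one_apply, one_mul]
      exact (Nat.mod_eq_of_lt (hmem x).2).symm
    | succ j ih =>
      intro x
      rw [pow_succ, Equiv.Perm.mul_apply, ih, hσval]
      have h1 : k ^ j * (k * ↑x % m) ≡ k ^ j * (k * ↑x) [MOD m] :=
        (Nat.mod_modEq _ _).mul_left _
      rw [h1]
      congr 1
      ring
  -- divisor invariant
  set dv : (PS k n) → ℕ := fun x => m / Nat.gcd m x.1 with hdv
  have hgcd_pos : ∀ x : (PS k n), 0 < Nat.gcd m x.1 := fun x => Nat.gcd_pos_of_pos_left _ (by omega)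
  have hdv_dvd : ∀ x : (PS k n), dv x ∣ m := by
    intro x
    exact Nat.div_dvd_of_dvd (Nat.gcd_dvd_left m x.1)
  have hdv_ne1 : ∀ x : (PS k n), dv x ≠ 1 := by
    intro x h1
    have hg : Nat.gcd m x.1 ∣ m := Nat.gcd_dvd_left m x.1
    have : m = Nat.gcd m x.1 := by
      conv_lhs => rw [← Nat.div_mul_cancel hg]
      rw [hdv] at h1
      simp only at h1
      rw [h1, one_mul]
    have : m ∣ x.1 := this ▸ Nat.gcd_dvd_right m x.1
    have h2 := (hmem x).1
    have h3 := (hmem x).2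
    have := Nat.le_of_dvd (by omega) this
    omega
  -- the order function
  set r : ℕ → ℕ := fun d => orderOf (k : ZMod d) with hr
  have hco_d : ∀ d : ℕ, d ∣ m → Nat.Coprime k d := by
    intro d hd
    exact Nat.Coprime.coprime_dvd_right hd hco.symm
  have hpow_one : ∀ d : ℕ, d ∣ m → d ≠ 1 → ((k : ZMod d)) ^ d.totient = 1 := by
    intro d hd hd1
    have hdpos : 0 < d := Nat.pos_of_dvd_of_pos hd (by omega)
    have := Nat.ModEq.pow_totient (hco_d d hd)
    have h2 : ((k ^ d.totient : ℕ) : ZMod d) = ((1 : ℕ) : ZMod d) :=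
      (ZMod.natCast_eq_natCast_iff _ _ _).mpr this
    rwa [Nat.cast_pow, Nat.cast_one] at h2
  have hr_pos : ∀ d : ℕ, d ∣ m → d ≠ 1 → 0 < r d := by
    intro d hd hd1
    have hdpos : 0 < d := Nat.pos_of_dvd_of_pos hd (by omega)
    have htot : 0 < d.totient := Nat.totient_pos.mpr hdpos
    exact orderOf_pos_iff.mpr (isOfFinOrder_iff_pow_eq_one.mpr ⟨d.totient, htot, hpow_one d hd hd1⟩)
  have hr_dvd_tot : ∀ d : ℕ, d ∣ m → d ≠ 1 → r d ∣ d.totient := by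
    intro d hd hd1
    exact orderOf_dvd_of_pow_eq_one (hpow_one d hd hd1)
  -- F2 : period characterization
  have F2 : ∀ (x : (PS k n)) (i : ℕ), (σ ^ i) x = x ↔ r (dv x) ∣ i := by
    intro x i
    set g := Nat.gcd m x.1 with hg
    set d := dv x with hd
    have hgm : g ∣ m := Nat.gcd_dvd_left m x.1
    have hgx : g ∣ x.1 := Nat.gcd_dvd_right m x.1
    have hgpos : 0 < g := hgcd_pos x
    have hmgd : m = g * d := (Nat.mul_div_cancel' hgm).symm
    set u := x.1 / g with hu
    have hxgu : x.1 = g * u := (Nat.mul_div_cancel' hgx).symm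
    have hcop : Nat.Coprime d u := Nat.coprime_div_gcd_div_gcd hgpos
    have hk1 : 1 ≤ k ^ i := Nat.one_le_pow _ _ (by omega)
    have hle : x.1 ≤ k ^ i * x.1 := Nat.le_mul_of_pos_left _ (by positivity)
    have i1 : (σ ^ i) x = x ↔ k ^ i * x.1 ≡ x.1 [MOD m] := by
      rw [← Subtype.coe_inj, hpow i x, Nat.ModEq, Nat.mod_eq_of_lt (hmem x).2]
    have i2 : k ^ i * x.1 ≡ x.1 [MOD m] ↔ m ∣ k ^ i * x.1 - x.1 :=
      ⟨fun h => (Nat.modEq_iff_dvd' hle).mp h.symm,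
       fun h => ((Nat.modEq_iff_dvd' hle).mpr h).symm⟩
    have eq1 : k ^ i * x.1 - x.1 = g * ((k ^ i - 1) * u) := by
      rw [hxgu, show g * ((k ^ i - 1) * u) = (k ^ i - 1) * (g * u) by ring,
        Nat.sub_mul, one_mul]
    have i3 : m ∣ k ^ i * x.1 - x.1 ↔ d ∣ (k ^ i - 1) * u := by
      rw [eq1]
      conv_lhs => rw [hmgd]
      exact Nat.mul_dvd_mul_iff_left hgpos
    have i4 : d ∣ (k ^ i - 1) * u ↔ d ∣ k ^ i - 1 :=
      ⟨fun h => hcop.dvd_of_dvd_mul_right h, fun h => Dvd.dvd.mul_right h u⟩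
    have i5 : d ∣ k ^ i - 1 ↔ (k : ZMod d) ^ i = 1 := by
      rw [← Nat.modEq_iff_dvd' hk1]
      constructor
      · intro h
        have h2 : ((k ^ i : ℕ) : ZMod d) = ((1 : ℕ) : ZMod d) :=
          (ZMod.natCast_eq_natCast_iff _ _ _).mpr h.symm
        rwa [Nat.cast_pow, Nat.cast_one] at h2
      · intro h
        have h2 : ((k ^ i : ℕ) : ZMod d) = ((1 : ℕ) : ZMod d) := by
          rwa [Nat.cast_pow, Nat.cast_one]
        exact ((ZMod.natCast_eq_natCast_iff _ _ _).mp h2).symm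
    have i6 : (k : ZMod d) ^ i = 1 ↔ r d ∣ i := (orderOf_dvd_iff_pow_eq_one).symm
    exact i1.trans (i2.trans (i3.trans (i4.trans (i5.trans i6))))
  -- dv is constant along the orbit
  have F1 : ∀ x : (PS k n), dv (σ x) = dv x := by
    intro x
    have hgcd : Nat.gcd m ((σ x).1) = Nat.gcd m x.1 := by
      rw [hσval x]
      have h1 : Nat.gcd m (k * x.1 % m) = Nat.gcd m (k * x.1) := by
        conv_rhs => rw [Nat.gcd_rec]
        rw [Nat.gcd_comm]
      rw [h1]
      exact Nat.Coprime.gcd_mul_left_cancel_right x.1 hco.symm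
    simp only [hdv]
    rw [hgcd]
  have F1' : ∀ (i : ℕ) (x : (PS k n)), dv ((σ ^ i) x) = dv x := by
    intro i
    induction i with
    | zero => intro x; rfl
    | succ j ih =>
      intro x
      rw [pow_succ, Equiv.Perm.mul_apply, ih, F1]
  -- orbit machinery
  set T := orderOf σ with hT
  have hTpos : 0 < T := orderOf_pos σ
  set Ox : (PS k n) → Finset (PS k n) := fun x => (Finset.range T).image (fun i => (σ ^ i) x) with hOx
  have mem_Ox : ∀ x y : (PS k n), y ∈ Ox x ↔ ∃ i : ℕ, (σ ^ i) x = y := by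
    intro x y
    simp only [hOx, Finset.mem_image, Finset.mem_range]
    constructor
    · rintro ⟨i, _, hi⟩; exact ⟨i, hi⟩
    · rintro ⟨i, hi⟩
      exact ⟨i % T, Nat.mod_lt _ hTpos, by rw [hT, pow_mod_orderOf]; exact hi⟩
  have hself : ∀ x : (PS k n), x ∈ Ox x := fun x => (mem_Ox x x).mpr ⟨0, rfl⟩
  have reach_symm : ∀ x y : (PS k n), (∃ i : ℕ, (σ ^ i) x = y) → ∃ j : ℕ, (σ ^ j) y = x := by
    rintro x y ⟨i, hi⟩
    refine ⟨T - i % T, ?_⟩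
    have h1 : (σ ^ (T - i % T)) ((σ ^ i) x) = (σ ^ (T - i % T)) ((σ ^ (i % T)) x) := by
      rw [hT, pow_mod_orderOf]
    rw [← hi, h1, ← Equiv.Perm.mul_apply, ← pow_add,
      Nat.sub_add_cancel (le_of_lt (Nat.mod_lt _ hTpos)), hT, pow_orderOf_eq_one]
    rfl
  have hOx_eq : ∀ x y : (PS k n), (∃ i : ℕ, (σ ^ i) x = y) → Ox x = Ox y := by
    intro x y hxy
    obtain ⟨j, hj⟩ := reach_symm x y hxy
    obtain ⟨i, hi⟩ := hxy
    ext z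
    rw [mem_Ox, mem_Ox]
    constructor
    · rintro ⟨a, ha⟩
      exact ⟨a + j, by rw [pow_add, Equiv.Perm.mul_apply, hj, ha]⟩
    · rintro ⟨a, ha⟩
      exact ⟨a + i, by rw [pow_add, Equiv.Perm.mul_apply, hi, ha]⟩
  -- labelling by minimum of orbit
  have hne : ∀ x : (PS k n), ((Ox x).image (fun z : (PS k n) => z.1)).Nonempty :=
    fun x => ⟨x.1, Finset.mem_image_of_mem _ (hself x)⟩
  set b : (PS k n) → ℕ := fun x => WithTop.untopD 0 (((Ox x).image (fun z : (PS k n) => z.1)).min) with hb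
  have hattain : ∀ x : (PS k n), ∃ u : (PS k n), u ∈ Ox x ∧ u.1 = b x := by
    intro x
    obtain ⟨w, hw⟩ := Finset.min_of_nonempty (hne x)
    obtain ⟨u, hu, hval⟩ := Finset.mem_image.mp (Finset.mem_of_min hw)
    refine ⟨u, hu, ?_⟩
    rw [hb]
    simp only
    rw [hw, WithTop.untopD_coe]
    exact hval
  have hb_of_orbit : ∀ x y : (PS k n), (∃ i : ℕ, (σ ^ i) x = y) → b x = b y := by
    intro x y h
    simp only [hb]
    rw [hOx_eq x y h]
  have hbσ : ∀ x : (PS k n), b (σ x) = b x :=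
    fun x => (hb_of_orbit x (σ x) ⟨1, by rw [pow_one]⟩).symm
  have hbeq : ∀ x y : (PS k n), b x = b y → ∃ i : ℕ, (σ ^ i) x = y := by
    intro x y hxy
    obtain ⟨u, hu, huv⟩ := hattain x
    obtain ⟨v, hv, hvv⟩ := hattain y
    have huv2 : u = v := Subtype.ext (by rw [huv, hvv, hxy])
    obtain ⟨i, hi⟩ := (mem_Ox x u).mp hu
    obtain ⟨j, hj⟩ := (mem_Ox y v).mp hv
    obtain ⟨j2, hj2⟩ := reach_symm y v ⟨j, hj⟩
    exact ⟨j2 + i, by rw [pow_add, Equiv.Perm.mul_apply, hi, huv2, hj2]⟩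
  -- fiber cardinality
  have card_fiber : ∀ x : (PS k n), (Finset.univ.filter (fun y : (PS k n) => b y = b x)).card = r (dv x) := by
    intro x
    have hfe : Finset.univ.filter (fun y : (PS k n) => b y = b x) = Ox x := by
      ext y
      simp only [Finset.mem_filter, Finset.mem_univ, true_and]
      rw [mem_Ox]
      constructor
      · intro h; exact hbeq x y h.symm
      · intro h; exact (hb_of_orbit x y h).symm
    rw [hfe]
    have hrr : 0 < r (dv x) := hr_pos _ (hdv_dvd x) (hdv_ne1 x)
    have h1 : Ox x = (Finset.range (r (dv x))).image (fun i => (σ ^ i) x) := by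
      ext z
      rw [mem_Ox]
      simp only [Finset.mem_image, Finset.mem_range]
      constructor
      · rintro ⟨i, hi⟩
        refine ⟨i % r (dv x), Nat.mod_lt _ hrr, ?_⟩
        have hq : (σ ^ (r (dv x) * (i / r (dv x)))) x = x := (F2 x _).mpr ⟨_, rfl⟩
        conv_rhs => rw [← hi, ← Nat.mod_add_div i (r (dv x))]
        rw [pow_add, Equiv.Perm.mul_apply, hq]
      · rintro ⟨i, _, hi⟩; exact ⟨i, hi⟩
    rw [h1, Finset.card_image_of_injOn, Finset.card_range]
    have key : ∀ i j : ℕ, i ≤ j → j < r (dv x) → (σ ^ i) x = (σ ^ j) x → j - i = 0 := by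
      intro i j hle hjlt hij
      have hy : (σ ^ (j - i)) ((σ ^ i) x) = (σ ^ i) x := by
        rw [← Equiv.Perm.mul_apply, ← pow_add, Nat.sub_add_cancel hle]
        exact hij.symm
      have hdvd := (F2 _ _).mp hy
      rw [F1'] at hdvd
      exact Nat.eq_zero_of_dvd_of_lt hdvd (lt_of_le_of_lt (Nat.sub_le _ _) hjlt)
    intro i hi j hj hij
    simp only [Finset.coe_range, Set.mem_Iio] at hi hj
    rcases le_total i j with hle | hle
    · have := key i j hle hj hij
      omega
    · have := key j i hle hi hij.symm
      omega
  -- divisor label on orbit values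
  set Dv : ℕ → ℕ := fun a => m / Nat.gcd m a with hDvdef
  have hDv : ∀ x : (PS k n), Dv (b x) = dv x := by
    intro x
    obtain ⟨u, hu, huv⟩ := hattain x
    obtain ⟨i, hi⟩ := (mem_Ox x u).mp hu
    have : dv u = dv x := by rw [← hi, F1']
    rw [← huv]
    exact this
  -- matrix of f
  have hM : LinearMap.toMatrix (Pi.basisFun ℝ (PS k n)) (Pi.basisFun ℝ (PS k n)) f
      = Matrix.of fun i j : (PS k n) => if i = σ j then (1:ℝ) else 0 := by
    ext i j
    rw [LinearMap.toMatrix_apply, Pi.basisFun_apply, hf j, Pi.basisFun_repr,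
      Matrix.of_apply, Pi.single_apply]
  rw [← LinearMap.charpoly_toMatrix f (Pi.basisFun ℝ (PS k n)), hM,
    perm_charpoly σ b hbσ hbeq]
  -- rewrite each factor
  have hprod1 : ∀ a ∈ Finset.univ.image b,
      ((X : ℝ[X]) ^ (Fintype.card {x : (PS k n) // b x = a}) - 1) = X ^ (r (Dv a)) - 1 := by
    intro a ha
    obtain ⟨x, _, hx⟩ := Finset.mem_image.mp ha
    subst hx
    rw [Fintype.card_subtype, card_fiber x, hDv x]
  rw [Finset.prod_congr rfl hprod1]
  have hmaps : ∀ a ∈ Finset.univ.image b, Dv a ∈ m.divisors.filter (· ≠ 1) := by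
    intro a ha
    obtain ⟨x, _, hx⟩ := Finset.mem_image.mp ha
    subst hx
    rw [hDv x, Finset.mem_filter, Nat.mem_divisors]
    exact ⟨⟨hdv_dvd x, by omega⟩, hdv_ne1 x⟩
  rw [← Finset.prod_fiberwise_of_maps_to hmaps (fun a => (X ^ (r (Dv a)) - 1 : ℝ[X]))]
  apply Finset.prod_congr rfl
  intro d hd
  have hdm : d ∣ m := (Nat.mem_divisors.mp (Finset.mem_filter.mp hd).1).1
  have hd1 : d ≠ 1 := (Finset.mem_filter.mp hd).2
  have hrd : 0 < r d := hr_pos d hdm hd1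
  have hinner : ∀ a ∈ (Finset.univ.image b).filter (fun a => Dv a = d),
      ((X : ℝ[X]) ^ (r (Dv a)) - 1) = X ^ (r d) - 1 := by
    intro a ha
    rw [(Finset.mem_filter.mp ha).2]
  rw [Finset.prod_congr rfl hinner, Finset.prod_const]
  congr 1
  -- counting : card of filter = totient d / r d
  set cnt := ((Finset.univ.image b).filter (fun a => Dv a = d)).card with hcnt
  suffices hkey : cnt * r d = d.totient by
    rw [← hkey, Nat.mul_div_cancel _ hrd]
  -- sum of fiber sizes
  have hS : (Finset.univ.filter (fun x : (PS k n) => dv x = d)).card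
      = ∑ a ∈ (Finset.univ.image b).filter (fun a => Dv a = d),
          ((Finset.univ.filter (fun x : (PS k n) => dv x = d)).filter
            (fun x => b x = a)).card := by
    apply Finset.card_eq_sum_card_fiberwise (f := b)
      (t := (Finset.univ.image b).filter (fun a => Dv a = d))
    intro x hx
    rw [Finset.mem_coe, Finset.mem_filter] at hx ⊢
    exact ⟨Finset.mem_image_of_mem b (Finset.mem_univ x), by rw [hDv x]; exact hx.2⟩
  have hfib_eq : ∀ a ∈ (Finset.univ.image b).filter (fun a => Dv a = d),
      ((Finset.univ.filter (fun x : (PS k n) => dv x = d)).filter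
        (fun x => b x = a)).card = r d := by
    intro a ha
    rw [Finset.filter_filter]
    have ha2 := (Finset.mem_filter.mp ha).2
    obtain ⟨x, _, hx⟩ := Finset.mem_image.mp (Finset.mem_filter.mp ha).1
    subst hx
    have hdvx : dv x = d := by rw [← hDv x]; exact ha2
    have : Finset.univ.filter (fun y : (PS k n) => dv y = d ∧ b y = b x)
        = Finset.univ.filter (fun y : (PS k n) => b y = b x) := by
      ext y
      simp only [Finset.mem_filter, Finset.mem_univ, true_and, and_iff_right_iff_imp]
      intro hy
      rw [← hdvx, ← hDv x, ← hy, hDv y]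
    rw [this, card_fiber x, hdvx]
  rw [Finset.sum_congr rfl hfib_eq, Finset.sum_const, smul_eq_mul] at hS
  -- totient count
  have htot : (Finset.univ.filter (fun x : (PS k n) => dv x = d)).card = d.totient := by
    rw [Nat.totient_eq_card_coprime]
    set g := m / d with hg
    have hgm : g * d = m := Nat.div_mul_cancel hdm
    have hgpos : 0 < g := by
      rcases Nat.eq_zero_or_pos g with h | h
      · rw [h, zero_mul] at hgm; omega
      · exact h
    have hdpos : 0 < d := Nat.pos_of_dvd_of_pos hdm (by omega)
    have hdvg : ∀ x : (PS k n), dv x = d ↔ Nat.gcd m x.1 = g := by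
      intro x
      constructor
      · intro h
        have hgcdm : Nat.gcd m x.1 ∣ m := Nat.gcd_dvd_left m x.1
        rw [hg, ← h]
        exact (Nat.div_div_self hgcdm (by omega)).symm
      · intro h
        rw [hdv]
        simp only
        rw [h, hg, Nat.div_div_self hdm (by omega)]
    refine Finset.card_bij' (fun x _ => x.1 / g)
      (fun u hu => (⟨g * u, by
        rw [Finset.mem_filter, Finset.mem_range] at hu
        have hu0 : u ≠ 0 := by
          intro h0
          rw [h0] at hu
          have := hu.2
          rw [Nat.coprime_zero_right] at this
          exact hd1 this
        refine Finset.mem_Icc.mpr ⟨Nat.mul_pos hgpos (Nat.pos_of_ne_zero hu0), ?_⟩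
        have : g * u < g * d := mul_lt_mul_of_pos_left hu.1 hgpos
        omega⟩ : (PS k n))) ?_ ?_ ?_ ?_
    · -- maps forward
      intro x hx
      rw [Finset.mem_filter] at hx
      have hgcd : Nat.gcd m x.1 = g := (hdvg x).mp hx.2
      have hgx : g ∣ x.1 := hgcd ▸ Nat.gcd_dvd_right m x.1
      rw [Finset.mem_filter, Finset.mem_range]
      constructor
      · -- x.1 / g < d
        have h1 : g * (x.1 / g) = x.1 := Nat.mul_div_cancel' hgx
        have h2 : x.1 < m := (hmem x).2
        by_contra hcon
        push_neg at hcon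
        have : g * d ≤ g * (x.1 / g) := Nat.mul_le_mul_left g hcon
        omega
      · -- coprime
        have h1 : Nat.gcd (g * d) (g * (x.1 / g)) = g * Nat.gcd d (x.1 / g) :=
          Nat.gcd_mul_left g d (x.1 / g)
        rw [Nat.mul_div_cancel' hgx, hgm, hgcd] at h1
        have : Nat.gcd d (x.1 / g) = 1 := by
          have := h1.symm
          nlinarith [Nat.le_of_dvd hgpos (dvd_refl g)]
        exact this
    · -- maps backward
      intro u hu
      rw [Finset.mem_filter, Finset.mem_range] at hu
      rw [Finset.mem_filter]
      refine ⟨Finset.mem_univ _, ?_⟩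
      apply (hdvg _).mpr
      show Nat.gcd m (g * u) = g
      rw [← hgm, Nat.gcd_mul_left]
      have : Nat.gcd d u = 1 := hu.2
      rw [this, mul_one]
    · -- left inverse
      intro x hx
      rw [Finset.mem_filter] at hx
      have hgcd : Nat.gcd m x.1 = g := (hdvg x).mp hx.2
      have hgx : g ∣ x.1 := hgcd ▸ Nat.gcd_dvd_right m x.1
      exact Subtype.ext (Nat.mul_div_cancel' hgx)
    · -- right inverse
      intro u hu
      exact Nat.mul_div_cancel_left u hgpos
  rw [hcnt]
  omega
end

section
/- Let k ≥ 2 and n ≥ 1 be integers and set m = kn+1. Then the sum over all divisors d of m of φ(d)·(ord_k(m)/ord_k(d)) equals the sum over j = 0, 1, …, ord_k(m)−1 of gcd(k^j − 1, m), where gcd(0, m) = m. Equivalently, ord_k(m)·i_k(m) = Σ_{j=0}^{ord_k(m)−1} gcd(k^j − 1, m). (Here ord_k(d) divides ord_k(m) for every divisor d of m, so each term is an integer.) -/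
private lemma ord_pos' {k d : ℕ} [NeZero d] (h : Nat.Coprime k d) :
    0 < orderOf (k : ZMod d) := by
  rw [← ZMod.coe_unitOfCoprime k h, orderOf_units]
  exact orderOf_pos _

private lemma ord_dvd_totient' {k d : ℕ} [NeZero d] (h : Nat.Coprime k d) :
    orderOf (k : ZMod d) ∣ Nat.totient d := by
  rw [← ZMod.coe_unitOfCoprime k h, orderOf_units, ← ZMod.card_units_eq_totient d]
  exact orderOf_dvd_card

private lemma pow_eq_one_iff' {k d j : ℕ} [NeZero d] (hk : 1 ≤ k) :
    (k : ZMod d) ^ j = 1 ↔ d ∣ k ^ j - 1 := by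
  have h1 : 1 ≤ k ^ j := Nat.one_le_pow _ _ hk
  rw [show ((1 : ZMod d)) = ((1 : ℕ) : ZMod d) by push_cast; ring, ← Nat.cast_pow,
    ZMod.natCast_eq_natCast_iff]
  constructor
  · intro h
    exact (Nat.modEq_iff_dvd' h1).mp h.symm
  · intro h
    exact ((Nat.modEq_iff_dvd' h1).mpr h).symm

private lemma gcd_eq_sum_totient' (a m : ℕ) (hm : 0 < m) :
    Nat.gcd a m = ∑ d ∈ m.divisors.filter (· ∣ a), Nat.totient d := by
  have hne : Nat.gcd a m ≠ 0 := fun h => hm.ne' (Nat.eq_zero_of_gcd_eq_zero_right h)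
  have h : (Nat.gcd a m).divisors = m.divisors.filter (· ∣ a) := by
    ext d
    simp only [Nat.mem_divisors, Finset.mem_filter, Nat.dvd_gcd_iff, hne, hm.ne',
      ne_eq, not_false_eq_true, and_true]
    tauto
  rw [← h, Nat.sum_totient]

private lemma card_filter_dvd' (r N : ℕ) (hr : 0 < r) (h : r ∣ N) :
    ((Finset.range N).filter (fun j => r ∣ j)).card = N / r := by
  obtain ⟨q, rfl⟩ := h
  have hq : r * q / r = q := Nat.mul_div_cancel_left q hr
  have himg : (Finset.range (r * q)).filter (fun j => r ∣ j)
      = (Finset.range q).image (fun i => r * i) := by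
    ext j
    simp only [Finset.mem_filter, Finset.mem_range, Finset.mem_image]
    constructor
    · rintro ⟨hjN, c, rfl⟩
      exact ⟨c, Nat.lt_of_mul_lt_mul_left hjN, rfl⟩
    · rintro ⟨i, hi, rfl⟩
      exact ⟨(Nat.mul_lt_mul_left hr).mpr hi, Dvd.intro i rfl⟩
  rw [himg, Finset.card_image_of_injective _ (mul_right_injective₀ hr.ne'), hq]
  simp

theorem sum_totient_mul_ord_ratio_eq_sum_gcd (k n : ℕ) (hk : 2 ≤ k) (hn : 1 ≤ n) :
    (∀ d ∈ (k * n + 1).divisors, orderOf (k : ZMod d) ∣ orderOf (k : ZMod (k * n + 1))) ∧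
    (∑ d ∈ (k * n + 1).divisors,
        Nat.totient d * (orderOf (k : ZMod (k * n + 1)) / orderOf (k : ZMod d)) =
      ∑ j ∈ Finset.range (orderOf (k : ZMod (k * n + 1))),
        Nat.gcd (k ^ j - 1) (k * n + 1)) ∧
    (orderOf (k : ZMod (k * n + 1)) *
        ∑ d ∈ (k * n + 1).divisors, Nat.totient d / orderOf (k : ZMod d) =
      ∑ j ∈ Finset.range (orderOf (k : ZMod (k * n + 1))),
        Nat.gcd (k ^ j - 1) (k * n + 1)) := by
  have hk1 : 1 ≤ k := le_trans (by norm_num) hk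
  set m := k * n + 1 with hm
  have hm0 : 0 < m := Nat.succ_pos _
  haveI : NeZero m := ⟨hm0.ne'⟩
  have hco : Nat.Coprime k m := by
    have h1 : Nat.Coprime k (1 + k * n) := by
      simpa using (Nat.coprime_add_mul_left_right k 1 n).mpr (Nat.coprime_one_right k)
    rwa [add_comm] at h1
  set N := orderOf (k : ZMod m) with hN
  -- part 1
  have hmain : ∀ d ∈ m.divisors, orderOf (k : ZMod d) ∣ N := by
    intro d hd
    obtain ⟨hdm, -⟩ := Nat.mem_divisors.mp hd
    haveI : NeZero d := ⟨(Nat.pos_of_mem_divisors hd).ne'⟩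
    have h1 : (k : ZMod m) ^ N = 1 := pow_orderOf_eq_one _
    have h2 : m ∣ k ^ N - 1 := (pow_eq_one_iff' hk1).mp h1
    have h3 : (k : ZMod d) ^ N = 1 := (pow_eq_one_iff' hk1).mpr (hdm.trans h2)
    exact orderOf_dvd_of_pow_eq_one h3
  -- part 2
  have hpart2 : ∑ d ∈ m.divisors, Nat.totient d * (N / orderOf (k : ZMod d)) =
      ∑ j ∈ Finset.range N, Nat.gcd (k ^ j - 1) m := by
    have step1 : ∀ j, Nat.gcd (k ^ j - 1) m =
        ∑ d ∈ m.divisors, if d ∣ k ^ j - 1 then Nat.totient d else 0 := by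
      intro j
      rw [gcd_eq_sum_totient' _ _ hm0, Finset.sum_filter]
    rw [Finset.sum_congr rfl fun j _ => step1 j, Finset.sum_comm]
    refine (Finset.sum_congr rfl fun d hd => ?_).symm
    obtain ⟨hdm, -⟩ := Nat.mem_divisors.mp hd
    haveI : NeZero d := ⟨(Nat.pos_of_mem_divisors hd).ne'⟩
    have hcod : Nat.Coprime k d := hco.coprime_dvd_right hdm
    have hordpos := ord_pos' hcod
    have hiff : ∀ j, (d ∣ k ^ j - 1) ↔ orderOf (k : ZMod d) ∣ j := by
      intro j
      rw [← pow_eq_one_iff' (d := d) hk1, orderOf_dvd_iff_pow_eq_one]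
    calc ∑ j ∈ Finset.range N, (if d ∣ k ^ j - 1 then Nat.totient d else 0)
        = ∑ j ∈ Finset.range N, (if orderOf (k : ZMod d) ∣ j then Nat.totient d else 0) := by
          refine Finset.sum_congr rfl fun j _ => ?_
          simp [hiff j]
      _ = ((Finset.range N).filter (fun j => orderOf (k : ZMod d) ∣ j)).card
            * Nat.totient d := by
          rw [← Finset.sum_filter, Finset.sum_const, smul_eq_mul]
      _ = Nat.totient d * (N / orderOf (k : ZMod d)) := by
          rw [card_filter_dvd' _ _ hordpos (hmain d hd), mul_comm]
  -- part 3
  have hpart3 : N * ∑ d ∈ m.divisors, Nat.totient d / orderOf (k : ZMod d) =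
      ∑ d ∈ m.divisors, Nat.totient d * (N / orderOf (k : ZMod d)) := by
    rw [Finset.mul_sum]
    refine Finset.sum_congr rfl fun d hd => ?_
    obtain ⟨hdm, -⟩ := Nat.mem_divisors.mp hd
    haveI : NeZero d := ⟨(Nat.pos_of_mem_divisors hd).ne'⟩
    have hcod : Nat.Coprime k d := hco.coprime_dvd_right hdm
    rw [← Nat.mul_div_assoc N (ord_dvd_totient' hcod),
      ← Nat.mul_div_assoc (Nat.totient d) (hmain d hd), mul_comm N (Nat.totient d)]
  exact ⟨hmain, hpart2, hpart3.trans hpart2⟩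
end

section
/- Let m ≥ 3 be an odd integer. Then Σ_{d | m, d ≠ 1} φ(d)/ord_2(d) = (1/ord_2(m))·(Σ_{j=0}^{ord_2(m)−1} gcd(2^j − 1, m)) − 1, where gcd(0, m) = m; equivalently, ord_2(m)·(1 + Σ_{d | m, d ≠ 1} φ(d)/ord_2(d)) = Σ_{j=0}^{ord_2(m)−1} gcd(2^j − 1, m). -/
lemma card_filter_dvd_range (e n : ℕ) (he : 0 < e) (hen : e ∣ n) :
    ((Finset.range n).filter (fun j => e ∣ j)).card = n / e := by
  obtain ⟨k, rfl⟩ := hen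
  have h : (Finset.range (e*k)).filter (fun j => e ∣ j)
      = (Finset.range k).image (fun i => e * i) := by
    ext j
    simp only [Finset.mem_filter, Finset.mem_range, Finset.mem_image]
    constructor
    · rintro ⟨hj, i, rfl⟩
      exact ⟨i, (Nat.mul_lt_mul_left he).mp hj, rfl⟩
    · rintro ⟨i, hi, rfl⟩
      exact ⟨(Nat.mul_lt_mul_left he).mpr hi, ⟨i, rfl⟩⟩
  rw [h, Finset.card_image_of_injective _ (mul_right_injective₀ he.ne'), Finset.card_range,
    Nat.mul_div_cancel_left _ he]

lemma pow_totient_zmod (d : ℕ) (hodd : Odd d) : (2 : ZMod d) ^ Nat.totient d = 1 := by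
  have hc : Nat.Coprime 2 d := Nat.coprime_two_left.mpr hodd
  have := (ZMod.natCast_eq_natCast_iff _ _ d).mpr (Nat.ModEq.pow_totient hc)
  push_cast at this
  exact this

theorem sum_totient_div_ord_two_eq (m : ℕ) (hm : 3 ≤ m) (hodd : Odd m) :
    orderOf (2 : ZMod m) *
        (1 + ∑ d ∈ m.divisors.filter (· ≠ 1), Nat.totient d / orderOf (2 : ZMod d)) =
      ∑ j ∈ Finset.range (orderOf (2 : ZMod m)), Nat.gcd (2 ^ j - 1) m := by
  have hm0 : m ≠ 0 := by omega
  haveI : NeZero m := ⟨hm0⟩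
  set n := orderOf (2 : ZMod m) with hn
  -- basic facts about each divisor d
  have hdfacts : ∀ d ∈ m.divisors, 0 < orderOf (2 : ZMod d) ∧
      orderOf (2 : ZMod d) ∣ Nat.totient d ∧ orderOf (2 : ZMod d) ∣ n := by
    intro d hd
    rw [Nat.mem_divisors] at hd
    obtain ⟨hdm, -⟩ := hd
    have hd0 : 0 < d := Nat.pos_of_dvd_of_pos hdm (by omega)
    have hdodd : Odd d := hodd.of_dvd_nat hdm
    have hpow : (2 : ZMod d) ^ Nat.totient d = 1 := pow_totient_zmod d hdodd
    have hfin : IsOfFinOrder (2 : ZMod d) :=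
      isOfFinOrder_iff_pow_eq_one.mpr ⟨Nat.totient d, Nat.totient_pos.mpr hd0, hpow⟩
    refine ⟨hfin.orderOf_pos, orderOf_dvd_of_pow_eq_one hpow, ?_⟩
    have h2 : (ZMod.castHom hdm (ZMod d)) (2 : ZMod m) = (2 : ZMod d) := by
      rw [show (2 : ZMod m) = ((1 : ZMod m) + 1) by norm_num, map_add, map_one]
      norm_num
    simpa [h2] using orderOf_map_dvd (ZMod.castHom hdm (ZMod d)).toMonoidHom (2 : ZMod m)
  -- divisibility condition as order condition
  have hcond : ∀ d ∈ m.divisors, ∀ j : ℕ,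
      (d ∣ 2 ^ j - 1 ↔ orderOf (2 : ZMod d) ∣ j) := by
    intro d hd j
    rw [Nat.mem_divisors] at hd
    have hd0 : 0 < d := Nat.pos_of_dvd_of_pos hd.1 (by omega)
    haveI : NeZero d := ⟨hd0.ne'⟩
    rw [← ZMod.natCast_eq_zero_iff, Nat.cast_sub (Nat.one_le_two_pow), sub_eq_zero]
    push_cast
    exact orderOf_dvd_iff_pow_eq_one.symm
  -- rewrite gcd as totient sum over divisors
  have hgcd : ∀ j : ℕ, Nat.gcd (2 ^ j - 1) m
      = ∑ d ∈ m.divisors, if d ∣ 2 ^ j - 1 then Nat.totient d else 0 := by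
    intro j
    rw [← Finset.sum_filter]
    conv_lhs => rw [← Nat.sum_totient (Nat.gcd (2 ^ j - 1) m)]
    apply Finset.sum_congr _ (fun _ _ => rfl)
    ext d
    simp only [Nat.mem_divisors, Finset.mem_filter, Nat.dvd_gcd_iff]
    constructor
    · rintro ⟨⟨h1, h2⟩, -⟩
      exact ⟨⟨h2, hm0⟩, h1⟩
    · rintro ⟨⟨h2, -⟩, h1⟩
      exact ⟨⟨h1, h2⟩, Nat.gcd_ne_zero_right hm0⟩
  -- main computation
  calc n * (1 + ∑ d ∈ m.divisors.filter (· ≠ 1), Nat.totient d / orderOf (2 : ZMod d))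
      = n * ∑ d ∈ m.divisors, Nat.totient d / orderOf (2 : ZMod d) := by
        congr 1
        have h1 : (1 : ℕ) ∈ m.divisors := Nat.one_mem_divisors.mpr hm0
        have he1 : Nat.totient 1 / orderOf (2 : ZMod 1) = 1 := by
          simp [Nat.totient_one, orderOf_eq_one_iff, Subsingleton.elim (2 : ZMod 1) 1]
        rw [← Finset.add_sum_erase _ _ h1, he1]
        congr 1
        apply Finset.sum_congr _ (fun _ _ => rfl)
        ext d
        simp [Finset.mem_erase, Finset.mem_filter, and_comm]
    _ = ∑ d ∈ m.divisors, Nat.totient d * (n / orderOf (2 : ZMod d)) := by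
        rw [Finset.mul_sum]
        apply Finset.sum_congr rfl
        intro d hd
        obtain ⟨hpos, hdvd1, hdvd2⟩ := hdfacts d hd
        rw [← Nat.mul_div_assoc _ hdvd1, ← Nat.mul_div_assoc _ hdvd2, Nat.mul_comm]
    _ = ∑ d ∈ m.divisors, ∑ j ∈ Finset.range n, if d ∣ 2 ^ j - 1 then Nat.totient d else 0 := by
        apply Finset.sum_congr rfl
        intro d hd
        obtain ⟨hpos, -, hdvd2⟩ := hdfacts d hd
        rw [← Finset.sum_filter]
        have hfilter : (Finset.range n).filter (fun j => d ∣ 2 ^ j - 1)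
            = (Finset.range n).filter (fun j => orderOf (2 : ZMod d) ∣ j) := by
          apply Finset.filter_congr
          intro j _
          simp [hcond d hd j]
        rw [hfilter, Finset.sum_const, card_filter_dvd_range _ _ hpos hdvd2, smul_eq_mul,
          Nat.mul_comm]
    _ = ∑ j ∈ Finset.range n, Nat.gcd (2 ^ j - 1) m := by
        rw [Finset.sum_comm]
        exact Finset.sum_congr rfl fun j _ => (hgcd j).symm
end

section
/- Let a, b, m, n be positive integers with gcd(a, b) = 1 and a > b. Then gcd(a^n − b^n, a^m − b^m) = a^{gcd(m,n)} − b^{gcd(m,n)}. -/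
theorem gcd_pow_sub_pow (a b m n : ℕ) (ha : 0 < a) (hb : 0 < b) (hm : 0 < m) (hn : 0 < n)
    (hco : Nat.Coprime a b) (hab : b < a) :
    Nat.gcd (a ^ n - b ^ n) (a ^ m - b ^ m) = a ^ Nat.gcd m n - b ^ Nat.gcd m n := by
  have hple : ∀ k : ℕ, b ^ k ≤ a ^ k := fun k => Nat.pow_le_pow_left hab.le k
  have hcop : ∀ k : ℕ, 0 < k → Nat.Coprime (a ^ k - b ^ k) (b ^ k) := by
    intro k hk
    have h := (hco.pow (n := k) (m := k))
    have e : a ^ k = (a ^ k - b ^ k) + b ^ k := (Nat.sub_add_cancel (hple k)).symm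
    rw [e] at h
    exact Nat.coprime_add_self_left.mp h
  -- key decomposition: for m ≤ n, a^n - b^n = a^(n-m) * (a^m - b^m) + b^m * (a^(n-m) - b^(n-m))
  have key : ∀ m n : ℕ, m ≤ n →
      a ^ n - b ^ n = (a ^ m - b ^ m) * a ^ (n - m) + b ^ m * (a ^ (n - m) - b ^ (n - m)) := by
    intro m n h
    have h1 := hple m
    have h2 := hple (n - m)
    have e1 : a ^ m * a ^ (n - m) = a ^ n := by rw [← pow_add]; congr 1; omega
    have e2 : b ^ m * b ^ (n - m) = b ^ n := by rw [← pow_add]; congr 1; omega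
    zify [h1, h2, hple n]
    have e1' : (a:ℤ)^m * (a:ℤ)^(n-m) = (a:ℤ)^n := by exact_mod_cast e1
    have e2' : (b:ℤ)^m * (b:ℤ)^(n-m) = (b:ℤ)^n := by exact_mod_cast e2
    linear_combination e2' - e1'
  suffices H : ∀ N m n : ℕ, 0 < m → 0 < n → m + n ≤ N →
      Nat.gcd (a ^ n - b ^ n) (a ^ m - b ^ m) = a ^ Nat.gcd m n - b ^ Nat.gcd m n by
    exact H (m + n) m n hm hn le_rfl
  intro N
  induction N with
  | zero => intro m n hm hn h; omega
  | succ N ih =>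
    intro m n hm hn hN
    rcases lt_trichotomy m n with h | h | h
    · have hmn : m ≤ n := h.le
      rw [key m n hmn, Nat.gcd_comm, add_comm, Nat.gcd_add_mul_left_right]
      have hc : Nat.Coprime (a ^ m - b ^ m) (b ^ m) := hcop m hm
      rw [Nat.Coprime.gcd_mul_left_cancel_right _ hc.symm, Nat.gcd_comm]
      have := ih m (n - m) hm (by omega) (by omega)
      rw [this, Nat.gcd_sub_self_right hmn]
    · subst h; rw [Nat.gcd_self, Nat.gcd_self]
    · have hnm : n ≤ m := h.le
      rw [key n m hnm, add_comm, Nat.gcd_add_mul_left_right]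
      have hc : Nat.Coprime (a ^ n - b ^ n) (b ^ n) := hcop n hn
      rw [Nat.Coprime.gcd_mul_left_cancel_right _ hc.symm]
      have := ih (m - n) n (by omega) hn (by omega)
      rw [this, Nat.gcd_sub_self_left hnm]
end

section
/- Let k ≥ 2 and n ≥ 1 be integers and set θ = ord_k(kn+1). Then θ·i_k(kn+1) = Σ_{d | θ} φ(θ/d)·gcd(k^d − 1, kn+1); that is, i_k(kn+1) = (1/θ)·Σ_{d | θ} φ(θ/d)·gcd(k^d − 1, kn+1). -/
lemma aux_ord_dvd_tot (k e : ℕ) (h : Nat.Coprime k e) :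
    orderOf (k : ZMod e) ∣ e.totient := by
  apply orderOf_dvd_of_pow_eq_one
  have := (ZMod.natCast_eq_natCast_iff _ _ _).mpr (Nat.ModEq.pow_totient h)
  push_cast at this
  simpa using this

lemma aux_dvd_iff (k e d : ℕ) (hk : 1 ≤ k) :
    e ∣ k ^ d - 1 ↔ orderOf (k : ZMod e) ∣ d := by
  rw [orderOf_dvd_iff_pow_eq_one]
  have h1 : (1 : ℕ) ≤ k ^ d := Nat.one_le_pow _ _ hk
  rw [← Nat.modEq_iff_dvd' h1, Nat.ModEq.comm, ← ZMod.natCast_eq_natCast_iff]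
  push_cast
  exact Iff.rfl

lemma aux_gcd_eq_sum (a m : ℕ) (hm : m ≠ 0) :
    Nat.gcd a m = ∑ e ∈ m.divisors.filter (· ∣ a), Nat.totient e := by
  conv_lhs => rw [← Nat.sum_totient (Nat.gcd a m)]
  apply Finset.sum_congr _ (fun _ _ => rfl)
  ext e
  simp only [Nat.mem_divisors, Finset.mem_filter]
  constructor
  · rintro ⟨h, h0⟩
    exact ⟨⟨h.trans (Nat.gcd_dvd_right _ _), hm⟩, h.trans (Nat.gcd_dvd_left _ _)⟩
  · rintro ⟨⟨h1, -⟩, h2⟩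
    exact ⟨Nat.dvd_gcd h2 h1, fun h => hm (Nat.eq_zero_of_gcd_eq_zero_right h)⟩

lemma aux_inner (θ o : ℕ) (hθ : θ ≠ 0) (ho : o ∣ θ) :
    ∑ d ∈ θ.divisors.filter (o ∣ ·), Nat.totient (θ / d) = θ / o := by
  have ho0 : o ≠ 0 := fun h => hθ (by simpa [h] using ho)
  have h := Nat.sum_totient (θ / o)
  rw [← Nat.sum_div_divisors (θ / o) Nat.totient] at h
  rw [← h]
  apply Finset.sum_nbij' (fun d => d / o) (fun t => o * t)
  · intro d hd
    simp only [Finset.mem_filter, Nat.mem_divisors] at hd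
    obtain ⟨⟨hdθ, -⟩, t, rfl⟩ := hd
    refine Nat.mem_divisors.mpr ⟨?_, Nat.div_ne_zero_iff_of_dvd ho |>.mpr ⟨hθ, ho0⟩⟩
    rw [Nat.mul_div_cancel_left _ (Nat.pos_of_ne_zero ho0)]
    exact (Nat.dvd_div_iff_mul_dvd ho).mpr hdθ
  · intro t ht
    simp only [Nat.mem_divisors] at ht
    simp only [Finset.mem_filter, Nat.mem_divisors]
    exact ⟨⟨(Nat.dvd_div_iff_mul_dvd ho).mp ht.1, hθ⟩, Dvd.intro t rfl⟩
  · intro d hd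
    simp only [Finset.mem_filter] at hd
    exact Nat.mul_div_cancel' hd.2
  · intro t ht
    exact Nat.mul_div_cancel_left _ (Nat.pos_of_ne_zero ho0)
  · intro d hd
    simp only [Finset.mem_filter] at hd
    obtain ⟨-, t, rfl⟩ := hd
    rw [Nat.mul_div_cancel_left _ (Nat.pos_of_ne_zero ho0), Nat.div_div_eq_div_mul]

theorem ord_mul_ik_eq_sum (k n : ℕ) (hk : 2 ≤ k) (hn : 1 ≤ n) :
    orderOf (k : ZMod (k * n + 1)) *
        ∑ d ∈ (k * n + 1).divisors, Nat.totient d / orderOf (k : ZMod d) =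
      ∑ d ∈ (orderOf (k : ZMod (k * n + 1))).divisors,
        Nat.totient (orderOf (k : ZMod (k * n + 1)) / d) *
          Nat.gcd (k ^ d - 1) (k * n + 1) := by
  have hk1 : 1 ≤ k := le_trans (by norm_num) hk
  set m := k * n + 1 with hm
  set θ := orderOf (k : ZMod m) with hθdef
  have hm0 : m ≠ 0 := Nat.succ_ne_zero _
  have hcop : Nat.Coprime k m := by
    simpa [hm, add_comm] using (Nat.coprime_one_right k).add_mul_left_right n
  have hθ0 : θ ≠ 0 := by
    intro h
    have := aux_ord_dvd_tot k m hcop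
    rw [← hθdef, h] at this
    exact (Nat.totient_pos.mpr (Nat.pos_of_ne_zero hm0)).ne' (Nat.eq_zero_of_zero_dvd this)
  -- facts about each divisor e of m
  have hoe : ∀ e ∈ m.divisors, orderOf (k : ZMod e) ∣ θ ∧
      orderOf (k : ZMod e) ∣ e.totient ∧ orderOf (k : ZMod e) ≠ 0 := by
    intro e he
    rw [Nat.mem_divisors] at he
    have hce : Nat.Coprime k e := Nat.Coprime.coprime_dvd_right he.1 hcop
    have h2 : orderOf (k : ZMod e) ∣ e.totient := aux_ord_dvd_tot k e hce
    have he0 : e ≠ 0 := fun h => hm0 (by simpa [h] using he.1)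
    have h3 : orderOf (k : ZMod e) ≠ 0 := by
      intro h
      rw [h] at h2
      exact (Nat.totient_pos.mpr (Nat.pos_of_ne_zero he0)).ne' (Nat.eq_zero_of_zero_dvd h2)
    refine ⟨?_, h2, h3⟩
    exact (aux_dvd_iff k e θ hk1).mp (he.1.trans ((aux_dvd_iff k m θ hk1).mpr dvd_rfl))
  -- rewrite RHS
  have rhs_eq : ∀ d ∈ θ.divisors,
      Nat.totient (θ / d) * Nat.gcd (k ^ d - 1) m =
      ∑ e ∈ m.divisors.filter (fun e => orderOf (k : ZMod e) ∣ d),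
        Nat.totient (θ / d) * Nat.totient e := by
    intro d hd
    rw [aux_gcd_eq_sum _ _ hm0, Finset.mul_sum]
    congr 1
    apply Finset.filter_congr
    intro e he
    exact aux_dvd_iff k e d hk1
  rw [Finset.sum_congr rfl rhs_eq]
  -- swap sums
  have swap : ∑ d ∈ θ.divisors, ∑ e ∈ m.divisors.filter (fun e => orderOf (k : ZMod e) ∣ d),
        Nat.totient (θ / d) * Nat.totient e =
      ∑ e ∈ m.divisors, ∑ d ∈ θ.divisors.filter (fun d => orderOf (k : ZMod e) ∣ d),
        Nat.totient (θ / d) * Nat.totient e := by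
    simp only [Finset.sum_filter]
    exact Finset.sum_comm
  rw [swap, Finset.mul_sum]
  apply Finset.sum_congr rfl
  intro e he
  obtain ⟨h1, h2, h3⟩ := hoe e he
  rw [← Finset.sum_mul, aux_inner θ _ hθ0 h1]
  -- θ * (φ e / o) = θ / o * φ e
  obtain ⟨a, ha⟩ := h1
  obtain ⟨b, hb⟩ := h2
  rw [ha, hb, Nat.mul_div_cancel_left _ (Nat.pos_of_ne_zero h3),
    Nat.mul_div_cancel_left _ (Nat.pos_of_ne_zero h3)]
  ring
end

section
/- Let k ≥ 2 be an integer. Then i_k(kn+1) = O(n / log n) as n → ∞; that is, there exists a constant c > 0 such that for every sufficiently large integer n, Σ_{d | kn+1} φ(d)/ord_k(d) ≤ c·n/log n. (In particular the same bound holds for C_k(n) = i_k(kn+1) − 1, the number of cycles of the (k,n)-perfect shuffle permutation.) -/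
theorem ik_is_big_O_n_div_log_n (k : ℕ) (hk : 2 ≤ k) :
    ∃ c : ℝ, 0 < c ∧ ∃ N : ℕ, ∀ n : ℕ, N ≤ n →
      ((∑ d ∈ (k * n + 1).divisors, Nat.totient d / orderOf (k : ZMod d) : ℕ) : ℝ) ≤
        c * n / Real.log n := by
  have hk1 : (1:ℝ) ≤ (k:ℝ) := by exact_mod_cast (le_trans (by norm_num) hk)
  have hlk0 : 0 ≤ Real.log k := Real.log_nonneg hk1
  refine ⟨2 * k * (1 + 3 * Real.log k), by positivity, 20000, fun n hn => ?_⟩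
  set m := k * n + 1 with hmdef
  have hk1n : 1 ≤ k := le_trans (by norm_num) hk
  have hn1 : 1 ≤ n := le_trans (by norm_num) hn
  have hmn : n ≤ m := by
    calc n = 1 * n := (one_mul n).symm
    _ ≤ k * n := Nat.mul_le_mul_right n hk1n
    _ ≤ m := Nat.le_succ _
  have hm2 : 2 ≤ m := le_trans (le_trans (by norm_num) hn) hmn
  have hm0 : (0:ℝ) < (m:ℝ) := by positivity
  have hm2kn : (m:ℝ) ≤ 2 * k * n := by
    have : m ≤ 2 * (k * n) := by
      have : 1 ≤ k * n := Nat.one_le_iff_ne_zero.mpr (by positivity)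
      omega
    calc (m:ℝ) ≤ ((2 * (k*n) : ℕ) : ℝ) := by exact_mod_cast this
    _ = 2 * k * n := by push_cast; ring
  have hn0 : (0:ℝ) < (n:ℝ) := by positivity
  have hlogn : 1 ≤ Real.log n := by
    rw [Real.le_log_iff_exp_le hn0]
    calc Real.exp 1 ≤ 3 := by nlinarith [Real.exp_one_lt_d9]
    _ ≤ (n:ℝ) := by exact_mod_cast le_trans (by norm_num) hn
  have hlognm : Real.log n ≤ Real.log m := by
    apply Real.log_le_log hn0; exact_mod_cast hmn
  have hlogm1 : 1 ≤ Real.log m := le_trans hlogn hlognm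
  have hlogm0 : 0 < Real.log m := lt_of_lt_of_le one_pos hlogm1
  -- log m ≤ m^(1/3)
  have hm19683 : (19683:ℝ) ≤ (m:ℝ) := by
    have : (19683:ℕ) ≤ m := le_trans (le_trans (by norm_num) hn) hmn
    exact_mod_cast this
  have hlogm_cube : Real.log m ≤ (m:ℝ) ^ ((1:ℝ)/3) := by
    have h1 : Real.log m ≤ (m:ℝ) ^ ((1:ℝ)/9) / (1/9) :=
      Real.log_le_rpow_div hm0.le (by norm_num)
    have h2 : (9:ℝ) ≤ (m:ℝ) ^ ((2:ℝ)/9) := by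
      calc (9:ℝ) = ((3:ℝ)^(9:ℕ)) ^ ((2:ℝ)/9) := by
            rw [← Real.rpow_natCast (3:ℝ) 9, ← Real.rpow_mul (by norm_num)]
            norm_num
      _ ≤ (m:ℝ) ^ ((2:ℝ)/9) := by
            apply Real.rpow_le_rpow (by positivity) _ (by norm_num)
            norm_num at hm19683 ⊢; linarith
    calc Real.log m ≤ (m:ℝ) ^ ((1:ℝ)/9) / (1/9) := h1
    _ = 9 * (m:ℝ) ^ ((1:ℝ)/9) := by ring
    _ ≤ (m:ℝ) ^ ((2:ℝ)/9) * (m:ℝ) ^ ((1:ℝ)/9) := by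
          apply mul_le_mul_of_nonneg_right h2 (by positivity)
    _ = (m:ℝ) ^ ((1:ℝ)/3) := by
          rw [← Real.rpow_add hm0]; norm_num
  -- split the sum
  classical
  rw [← Finset.sum_filter_add_sum_filter_not m.divisors (fun d => d ^ 3 ≤ m)
    (fun d => Nat.totient d / orderOf ((k:ℕ) : ZMod d))]
  rw [Nat.cast_add]
  -- small part
  set r : ℕ := Nat.floor ((m:ℝ) ^ ((1:ℝ)/3)) with hrdef
  have hsmall : (∑ d ∈ m.divisors.filter (fun d => d ^ 3 ≤ m),
      (Nat.totient d / orderOf ((k:ℕ) : ZMod d))) ≤ r * r := by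
    have hsub : m.divisors.filter (fun d => d ^ 3 ≤ m) ⊆ Finset.Icc 1 r := by
      intro d hd
      simp only [Finset.mem_filter, Nat.mem_divisors] at hd
      obtain ⟨⟨hdvd, hm0'⟩, hd3⟩ := hd
      have hdpos : 1 ≤ d := Nat.pos_of_dvd_of_pos hdvd (Nat.pos_of_ne_zero hm0')
      have hdr : d ≤ r := by
        apply Nat.le_floor
        have hcast : ((d:ℝ))^(3:ℕ) ≤ (m:ℝ) := by exact_mod_cast hd3
        calc (d:ℝ) = (((d:ℝ))^(3:ℕ)) ^ ((1:ℝ)/3) := by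
              rw [← Real.rpow_natCast (d:ℝ) 3, ← Real.rpow_mul (by positivity)]
              norm_num
        _ ≤ (m:ℝ) ^ ((1:ℝ)/3) :=
              Real.rpow_le_rpow (by positivity) hcast (by norm_num)
      exact Finset.mem_Icc.mpr ⟨hdpos, hdr⟩
    calc (∑ d ∈ m.divisors.filter (fun d => d ^ 3 ≤ m),
        (Nat.totient d / orderOf ((k:ℕ) : ZMod d)))
        ≤ ∑ d ∈ m.divisors.filter (fun d => d ^ 3 ≤ m), d :=
          Finset.sum_le_sum (fun d _ => le_trans (Nat.div_le_self _ _) (Nat.totient_le d))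
    _ ≤ ∑ d ∈ Finset.Icc 1 r, d := Finset.sum_le_sum_of_subset hsub
    _ ≤ ∑ _d ∈ Finset.Icc 1 r, r := Finset.sum_le_sum (fun d hd => (Finset.mem_Icc.mp hd).2)
    _ = (Finset.Icc 1 r).card * r := by rw [Finset.sum_const, smul_eq_mul]
    _ ≤ r * r := by
          apply Nat.mul_le_mul_right
          rw [Nat.card_Icc]; omega
  have hsmallR : ((∑ d ∈ m.divisors.filter (fun d => d ^ 3 ≤ m),
      (Nat.totient d / orderOf ((k:ℕ) : ZMod d)) : ℕ) : ℝ) ≤ (m:ℝ) / Real.log m := by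
    have h1 : ((r:ℝ)) ≤ (m:ℝ) ^ ((1:ℝ)/3) := Nat.floor_le (by positivity)
    have h2 : ((r * r : ℕ):ℝ) ≤ (m:ℝ) ^ ((2:ℝ)/3) := by
      rw [Nat.cast_mul]
      calc (r:ℝ) * r ≤ (m:ℝ) ^ ((1:ℝ)/3) * (m:ℝ) ^ ((1:ℝ)/3) :=
            mul_le_mul h1 h1 (by positivity) (by positivity)
      _ = (m:ℝ) ^ ((2:ℝ)/3) := by rw [← Real.rpow_add hm0]; norm_num
    have h3 : (m:ℝ) ^ ((2:ℝ)/3) ≤ (m:ℝ) / Real.log m := by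
      rw [le_div_iff₀ hlogm0]
      calc (m:ℝ) ^ ((2:ℝ)/3) * Real.log m ≤ (m:ℝ) ^ ((2:ℝ)/3) * (m:ℝ) ^ ((1:ℝ)/3) :=
            mul_le_mul_of_nonneg_left hlogm_cube (by positivity)
      _ = (m:ℝ) := by rw [← Real.rpow_add hm0]; norm_num
    calc ((∑ d ∈ m.divisors.filter (fun d => d ^ 3 ≤ m),
        (Nat.totient d / orderOf ((k:ℕ) : ZMod d)) : ℕ) : ℝ)
        ≤ ((r * r : ℕ):ℝ) := by exact_mod_cast hsmall
    _ ≤ (m:ℝ) ^ ((2:ℝ)/3) := h2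
    _ ≤ (m:ℝ) / Real.log m := h3
  -- large part
  have hlargeR : ((∑ d ∈ m.divisors.filter (fun d => ¬ d ^ 3 ≤ m),
      (Nat.totient d / orderOf ((k:ℕ) : ZMod d)) : ℕ) : ℝ) ≤
      3 * Real.log k * (m:ℝ) / Real.log m := by
    have hterm : ∀ d ∈ m.divisors.filter (fun d => ¬ d ^ 3 ≤ m),
        ((Nat.totient d / orderOf ((k:ℕ) : ZMod d) : ℕ) : ℝ) ≤
        (Nat.totient d : ℝ) * (3 * Real.log k / Real.log m) := by
      intro d hd
      simp only [Finset.mem_filter, Nat.mem_divisors] at hd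
      obtain ⟨⟨hdvd, hm0'⟩, hd3⟩ := hd
      have hdpos : 1 ≤ d := Nat.pos_of_dvd_of_pos hdvd (Nat.pos_of_ne_zero hm0')
      -- coprimality
      have hcop : Nat.Coprime k d := by
        have h1 : Nat.gcd k d ∣ k * n := Dvd.dvd.mul_right (Nat.gcd_dvd_left k d) n
        have h2 : Nat.gcd k d ∣ m := dvd_trans (Nat.gcd_dvd_right k d) hdvd
        have h3 : Nat.gcd k d ∣ 1 := by
          have := Nat.dvd_sub h2 h1
          simpa [hmdef] using this
        exact Nat.eq_one_of_dvd_one h3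
      -- finite order
      have hpowtot : ((k:ℕ) : ZMod d) ^ (Nat.totient d) = 1 := by
        have h := Nat.ModEq.pow_totient hcop
        have := (ZMod.natCast_eq_natCast_iff (k ^ Nat.totient d) 1 d).mpr h
        simpa using this
      have hfin : IsOfFinOrder ((k:ℕ) : ZMod d) :=
        isOfFinOrder_iff_pow_eq_one.mpr ⟨Nat.totient d, Nat.totient_pos.mpr hdpos, hpowtot⟩
      set o : ℕ := orderOf ((k:ℕ) : ZMod d) with hodef
      have ho1 : 1 ≤ o := hfin.orderOf_pos
      -- d < k ^ o
      have hdlt : d < k ^ o := by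
        have hpow : ((k:ℕ) : ZMod d) ^ o = 1 := pow_orderOf_eq_one _
        have hmodeq : k ^ o ≡ 1 [MOD d] := by
          rw [← ZMod.natCast_eq_natCast_iff]
          simpa using hpow
        have hk1le : 1 ≤ k ^ o := Nat.one_le_pow _ _ (by omega)
        have hdvd1 : d ∣ k ^ o - 1 := (Nat.modEq_iff_dvd' hk1le).mp hmodeq.symm
        have hko2 : 2 ≤ k ^ o := by
          calc 2 ≤ k := hk
          _ = k ^ 1 := (pow_one k).symm
          _ ≤ k ^ o := Nat.pow_le_pow_right (by omega) ho1
        have : d ≤ k ^ o - 1 := Nat.le_of_dvd (by omega) hdvd1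
        omega
      -- order lower bound in ℝ
      have hlogk0 : 0 < Real.log k := Real.log_pos (by exact_mod_cast hk)
      have hd2 : 2 ≤ d := by
        by_contra h
        apply hd3
        have hd1 : d = 1 := by omega
        subst hd1
        simpa using Nat.one_le_iff_ne_zero.mpr (by omega : m ≠ 0)
      have hlogd0 : 0 < Real.log d := Real.log_pos (by exact_mod_cast hd2)
      have hom : Real.log m ≤ 3 * Real.log d := by
        have : (m:ℝ) ≤ ((d:ℝ)) ^ (3:ℕ) := by
          have : m ≤ d ^ 3 := le_of_lt (Nat.lt_of_not_le hd3)
          exact_mod_cast this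
        calc Real.log m ≤ Real.log ((d:ℝ) ^ (3:ℕ)) :=
              Real.log_le_log hm0 this
        _ = 3 * Real.log d := by rw [Real.log_pow]; push_cast; ring
      have hogd : Real.log d ≤ (o:ℝ) * Real.log k := by
        have : (d:ℝ) < (k:ℝ) ^ (o:ℕ) := by exact_mod_cast hdlt
        calc Real.log d ≤ Real.log ((k:ℝ) ^ (o:ℕ)) :=
              Real.log_le_log (by positivity) this.le
        _ = (o:ℝ) * Real.log k := by rw [Real.log_pow]
      have ho_lb : Real.log m / (3 * Real.log k) ≤ (o:ℝ) := by
        rw [div_le_iff₀ (by positivity)]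
        calc Real.log m ≤ 3 * Real.log d := hom
        _ ≤ 3 * ((o:ℝ) * Real.log k) := by linarith
        _ = (o:ℝ) * (3 * Real.log k) := by ring
      have ho_lb_pos : 0 < Real.log m / (3 * Real.log k) := by positivity
      calc ((Nat.totient d / o : ℕ) : ℝ) ≤ (Nat.totient d : ℝ) / (o:ℝ) :=
            Nat.cast_div_le
      _ ≤ (Nat.totient d : ℝ) / (Real.log m / (3 * Real.log k)) := by
            apply div_le_div_of_nonneg_left _ ho_lb_pos ho_lb
            · positivity
      _ = (Nat.totient d : ℝ) * (3 * Real.log k / Real.log m) := by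
            field_simp
    calc ((∑ d ∈ m.divisors.filter (fun d => ¬ d ^ 3 ≤ m),
        (Nat.totient d / orderOf ((k:ℕ) : ZMod d)) : ℕ) : ℝ)
        = ∑ d ∈ m.divisors.filter (fun d => ¬ d ^ 3 ≤ m),
          ((Nat.totient d / orderOf ((k:ℕ) : ZMod d) : ℕ) : ℝ) := Nat.cast_sum _ _
    _ ≤ ∑ d ∈ m.divisors.filter (fun d => ¬ d ^ 3 ≤ m),
          (Nat.totient d : ℝ) * (3 * Real.log k / Real.log m) :=
          Finset.sum_le_sum hterm
    _ = (∑ d ∈ m.divisors.filter (fun d => ¬ d ^ 3 ≤ m), (Nat.totient d : ℝ)) *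
          (3 * Real.log k / Real.log m) := by rw [← Finset.sum_mul]
    _ ≤ (∑ d ∈ m.divisors, (Nat.totient d : ℝ)) * (3 * Real.log k / Real.log m) := by
          apply mul_le_mul_of_nonneg_right _ (by positivity)
          apply Finset.sum_le_sum_of_subset_of_nonneg (Finset.filter_subset _ _)
          intro i _ _; positivity
    _ = (m:ℝ) * (3 * Real.log k / Real.log m) := by
          congr 1
          rw [← Nat.cast_sum]
          exact_mod_cast congrArg (Nat.cast : ℕ → ℝ) (Nat.sum_totient m)
    _ = 3 * Real.log k * (m:ℝ) / Real.log m := by ring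
  -- combine
  have hmain : ((∑ d ∈ m.divisors.filter (fun d => d ^ 3 ≤ m),
      (Nat.totient d / orderOf ((k:ℕ) : ZMod d)) : ℕ) : ℝ) +
      ((∑ d ∈ m.divisors.filter (fun d => ¬ d ^ 3 ≤ m),
      (Nat.totient d / orderOf ((k:ℕ) : ZMod d)) : ℕ) : ℝ) ≤
      (1 + 3 * Real.log k) * ((m:ℝ) / Real.log m) := by
    calc _ ≤ (m:ℝ) / Real.log m + 3 * Real.log k * (m:ℝ) / Real.log m :=
          add_le_add hsmallR hlargeR
    _ = (1 + 3 * Real.log k) * ((m:ℝ) / Real.log m) := by ring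
  have hfinal : (m:ℝ) / Real.log m ≤ 2 * k * n / Real.log n := by
    apply div_le_div₀ (by positivity) hm2kn (by linarith) hlognm
  calc _ ≤ (1 + 3 * Real.log k) * ((m:ℝ) / Real.log m) := hmain
  _ ≤ (1 + 3 * Real.log k) * (2 * k * n / Real.log n) := by
        apply mul_le_mul_of_nonneg_left hfinal (by positivity)
  _ = 2 * k * (1 + 3 * Real.log k) * n / Real.log n := by ring
end

section
/- Let k ≥ 2 and ℓ ≥ 2 be integers and set n = k^ℓ − k^{ℓ−1} − 1 (so that kn+1 = (k^ℓ − 1)(k − 1)). Then i_k(kn+1) ≥ (k^ℓ − 1)/ℓ. -/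
theorem ik_lower_bound (k l : ℕ) (hk : 2 ≤ k) (hl : 2 ≤ l) (n : ℕ)
    (hn : n = k ^ l - k ^ (l - 1) - 1) :
    ((k ^ l - 1 : ℕ) : ℝ) / (l : ℝ) ≤
      ((∑ d ∈ (k * n + 1).divisors, Nat.totient d / orderOf (k : ZMod d) : ℕ) : ℝ) := by
  have hk1 : 1 ≤ k := by omega
  have ha1 : 1 ≤ k ^ (l - 1) := Nat.one_le_pow _ _ (by omega)
  have hkl : k ^ l = k ^ (l - 1) * k := by
    rw [← pow_succ]; congr 1; omega
  have hkl1 : 1 ≤ k ^ l := Nat.one_le_pow _ _ (by omega)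
  set M := k ^ l - 1 with hM
  set N := k * n + 1 with hN
  -- N = M * (k - 1)
  have hsub1 : k ^ (l - 1) ≤ k ^ (l - 1) * k := Nat.le_mul_of_pos_right _ (by omega)
  have hsub2 : 1 ≤ k ^ (l - 1) * k - k ^ (l - 1) := by
    have h2 : k ^ (l - 1) * 2 ≤ k ^ (l - 1) * k := Nat.mul_le_mul_left _ hk
    omega
  have hb1 : 1 ≤ k * k ^ (l - 1) := by
    calc 1 ≤ k ^ (l - 1) * k := le_trans hsub2 (Nat.sub_le _ _)
      _ = k * k ^ (l - 1) := mul_comm _ _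
  have hNeq : N = M * (k - 1) := by
    rw [hN, hM, hn, hkl]
    zify [hsub1, hsub2, hb1, hk1]
    rw [Nat.cast_sub (le_trans hsub2 (Nat.sub_le _ _))]
    push_cast
    ring
  have hdvd : M ∣ N := ⟨k - 1, hNeq⟩
  have hN0 : 0 < N := by omega
  have hM0 : 0 < M := by
    have h1 : 2 ^ 2 ≤ k ^ 2 := Nat.pow_le_pow_left hk 2
    have h2 : k ^ 2 ≤ k ^ l := Nat.pow_le_pow_right hk1 hl
    omega
  -- pointwise bound on divisors of M
  have key : ∀ d ∈ M.divisors, Nat.totient d ≤ l * (Nat.totient d / orderOf (k : ZMod d)) := by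
    intro d hdmem
    have hd : d ∣ M := (Nat.mem_divisors.mp hdmem).1
    have hd0 : 0 < d := Nat.pos_of_mem_divisors hdmem
    haveI : NeZero d := ⟨hd0.ne'⟩
    have hpow : (k : ZMod d) ^ l = 1 := by
      have h0 : ((M : ℕ) : ZMod d) = 0 := (ZMod.natCast_eq_zero_iff _ _).mpr hd
      rw [hM, Nat.cast_sub hkl1] at h0
      push_cast at h0
      rwa [sub_eq_zero] at h0
    set o := orderOf (k : ZMod d) with ho
    have hol : o ∣ l := orderOf_dvd_of_pow_eq_one hpow
    have ho0 : 0 < o := by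
      rcases Nat.eq_zero_or_pos o with h | h
      · exfalso; rw [h] at hol; omega
      · exact h
    have hole : o ≤ l := Nat.le_of_dvd (by omega) hol
    have hu : IsUnit (k : ZMod d) := IsUnit.of_pow_eq_one hpow (by omega)
    obtain ⟨u, hu⟩ := hu
    have hot : o ∣ Nat.totient d := by
      rw [ho, ← hu, orderOf_units]
      have := orderOf_dvd_card (x := u)
      rwa [ZMod.card_units_eq_totient d] at this
    calc Nat.totient d = o * (Nat.totient d / o) := (Nat.mul_div_cancel' hot).symm
      _ ≤ l * (Nat.totient d / o) := Nat.mul_le_mul_right _ hole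
  -- sum over divisors of M bounds M
  have hsumM : M ≤ l * ∑ d ∈ M.divisors, Nat.totient d / orderOf (k : ZMod d) := by
    calc M = ∑ d ∈ M.divisors, Nat.totient d := (Nat.sum_totient M).symm
      _ ≤ ∑ d ∈ M.divisors, l * (Nat.totient d / orderOf (k : ZMod d)) :=
          Finset.sum_le_sum key
      _ = l * ∑ d ∈ M.divisors, Nat.totient d / orderOf (k : ZMod d) :=
          (Finset.mul_sum _ _ _).symm
  have hsubset : M.divisors ⊆ N.divisors := Nat.divisors_subset_of_dvd hN0.ne' hdvd
  have hsums : ∑ d ∈ M.divisors, Nat.totient d / orderOf (k : ZMod d) ≤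
      ∑ d ∈ N.divisors, Nat.totient d / orderOf (k : ZMod d) :=
    Finset.sum_le_sum_of_subset hsubset
  have hfinal : M ≤ l * ∑ d ∈ N.divisors, Nat.totient d / orderOf (k : ZMod d) := by
    calc M ≤ l * ∑ d ∈ M.divisors, Nat.totient d / orderOf (k : ZMod d) := hsumM
      _ ≤ l * ∑ d ∈ N.divisors, Nat.totient d / orderOf (k : ZMod d) :=
        Nat.mul_le_mul_left _ hsums
  have hl0 : (0 : ℝ) < (l : ℝ) := by positivity
  rw [div_le_iff₀ hl0]
  have := (Nat.cast_le (α := ℝ)).mpr hfinal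
  push_cast at this ⊢
  linarith
end
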